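/- arXiv:1305.4215 — 3 statements merged into one kernel-verified Lean document; each statement's English description precedes it below -/
import Mathlib

section
/- Let X be a topological space, s ⊆ X a subset homeomorphic to a closed square disc, and α : I → X a loop such that α((t₁,t₂)) is contained in the interior of s and α(t₁), α(t₂) ∈ s. Then α is homotopic rel endpoints of [t₁,t₂] to the path that agrees with α outside (t₁,t₂) and follows the image (under the homeomorphism) of the straight line segment joining α(t₁) and α(t₂) inside s, by a homotopy whose image differs from α's image only inside s. -/
/-- The closed unit square in the plane. -/
def unitSquare : Set (ℝ × ℝ) := Set.Icc (0 : ℝ) 1 ×ˢ Set.Icc (0 : ℝ) 1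

/-- The open unit square in the plane. -/
def openUnitSquare : Set (ℝ × ℝ) := Set.Ioo (0 : ℝ) 1 ×ˢ Set.Ioo (0 : ℝ) 1

lemma convex_unitSquare : Convex ℝ unitSquare :=
  (convex_Icc _ _).prod (convex_Icc _ _)

lemma continuousOn_union_of_isClosed' {Y Z : Type*} [TopologicalSpace Y] [TopologicalSpace Z]
    {f : Y → Z} {s t : Set Y} (hs : IsClosed s) (ht : IsClosed t)
    (h1 : ContinuousOn f s) (h2 : ContinuousOn f t) : ContinuousOn f (s ∪ t) := by
  intro x _
  apply ContinuousWithinAt.union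
  · by_cases h : x ∈ s
    · exact h1 x h
    · exact continuousWithinAt_of_notMem_closure (by rwa [hs.closure_eq])
  · by_cases h : x ∈ t
    · exact h2 x h
    · exact continuousWithinAt_of_notMem_closure (by rwa [ht.closure_eq])

/-- If a piece of a loop runs inside (the interior of) a subset `s` homeomorphic to a closed
square disc, it can be replaced, by a homotopy rel the endpoints of `[t₁,t₂]` supported in `s`,
by the image of the straight segment joining its endpoints. -/
theorem loop_piece_in_square_homotopic_to_segment
    {X : Type*} [TopologicalSpace X] (s : Set X) (e : unitSquare ≃ₜ s)
    (α : ℝ → X) (hα : ContinuousOn α (Set.Icc (0 : ℝ) 1))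
    (hloop : α 0 = α 1)
    (t₁ t₂ : ℝ) (ht : t₁ < t₂) (ht₁ : t₁ ∈ Set.Icc (0 : ℝ) 1) (ht₂ : t₂ ∈ Set.Icc (0 : ℝ) 1)
    (hint : ∀ t ∈ Set.Ioo t₁ t₂,
      ∃ u ∈ openUnitSquare, ∃ hu : u ∈ unitSquare, α t = (e ⟨u, hu⟩ : X))
    (p q : unitSquare) (hp : α t₁ = (e p : X)) (hq : α t₂ = (e q : X)) :
    ∃ α' : ℝ → X, ∃ H : ℝ × ℝ → X,
      ContinuousOn α' (Set.Icc (0 : ℝ) 1) ∧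
      (∀ t, t ∉ Set.Ioo t₁ t₂ → α' t = α t) ∧
      (∀ t ∈ Set.Icc t₁ t₂, ∃ u ∈ segment ℝ (p : ℝ × ℝ) (q : ℝ × ℝ),
        ∃ hu : u ∈ unitSquare, α' t = (e ⟨u, hu⟩ : X)) ∧
      ContinuousOn H (Set.Icc t₁ t₂ ×ˢ Set.Icc (0 : ℝ) 1) ∧
      (∀ t ∈ Set.Icc t₁ t₂, H (t, 0) = α t) ∧
      (∀ t ∈ Set.Icc t₁ t₂, H (t, 1) = α' t) ∧
      (∀ u ∈ Set.Icc (0 : ℝ) 1, H (t₁, u) = α t₁ ∧ H (t₂, u) = α t₂) ∧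
      (∀ t ∈ Set.Icc t₁ t₂, ∀ u ∈ Set.Icc (0 : ℝ) 1, H (t, u) = α t ∨ H (t, u) ∈ s) := by
  classical
  have hsub : Set.Icc t₁ t₂ ⊆ Set.Icc (0 : ℝ) 1 := Set.Icc_subset_Icc ht₁.1 ht₂.2
  have hmem : ∀ t ∈ Set.Icc t₁ t₂, α t ∈ s := by
    intro t htt
    rcases eq_or_lt_of_le htt.1 with h1 | h1
    · rw [← h1, hp]; exact (e p).2
    rcases eq_or_lt_of_le htt.2 with h2 | h2
    · rw [h2, hq]; exact (e q).2
    · obtain ⟨u, _, hu', heq⟩ := hint t ⟨h1, h2⟩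
      rw [heq]; exact (e ⟨u, hu'⟩).2
  -- extension of `e.symm` to all of `X`
  set f : X → ℝ × ℝ := fun x => if h : x ∈ s then ((e.symm ⟨x, h⟩ : unitSquare) : ℝ × ℝ) else 0
    with hf
  have hfval : ∀ x (h : x ∈ s), f x = ((e.symm ⟨x, h⟩ : unitSquare) : ℝ × ℝ) :=
    fun x h => dif_pos h
  have hfc : ContinuousOn f s := by
    rw [continuousOn_iff_continuous_restrict]
    have hre : s.domRestrict f = fun x : s => ((e.symm x : unitSquare) : ℝ × ℝ) := by
      funext x
      simp only [Set.domRestrict_apply, hf, dif_pos x.2]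
    rw [hre]
    exact continuous_subtype_val.comp e.symm.continuous
  -- extension of `e` to all of `ℝ × ℝ`
  set g : ℝ × ℝ → X := fun y => if h : y ∈ unitSquare then (e ⟨y, h⟩ : X) else α 0 with hg
  have hgval : ∀ y (h : y ∈ unitSquare), g y = (e ⟨y, h⟩ : X) := fun y h => dif_pos h
  have hgc : ContinuousOn g unitSquare := by
    rw [continuousOn_iff_continuous_restrict]
    have hre : unitSquare.domRestrict g = fun y : unitSquare => (e y : X) := by
      funext y
      simp only [Set.domRestrict_apply, hg, dif_pos y.2]
    rw [hre]
    exact continuous_subtype_val.comp e.continuous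
  -- line parameter
  have hden : (0 : ℝ) < t₂ - t₁ := sub_pos.mpr ht
  set lin : ℝ → ℝ := fun t => (t - t₁) / (t₂ - t₁) with hlin
  have hlinc : Continuous lin := by
    apply Continuous.div_const
    exact continuous_id.sub continuous_const
  have hlin0 : lin t₁ = 0 := by simp [hlin]
  have hlin1 : lin t₂ = 1 := by
    rw [hlin]; field_simp
  have hlinmem : ∀ t ∈ Set.Icc t₁ t₂, lin t ∈ Set.Icc (0 : ℝ) 1 := by
    intro t htt
    constructor
    · exact div_nonneg (sub_nonneg.mpr htt.1) hden.le
    · rw [div_le_one hden]; linarith [htt.2]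
  set σ : ℝ → ℝ × ℝ := fun t => (1 - lin t) • (p : ℝ × ℝ) + lin t • (q : ℝ × ℝ) with hσ
  have hσc : Continuous σ :=
    ((continuous_const.sub hlinc).smul continuous_const).add (hlinc.smul continuous_const)
  have hσseg : ∀ t ∈ Set.Icc t₁ t₂, σ t ∈ segment ℝ (p : ℝ × ℝ) (q : ℝ × ℝ) := by
    intro t htt
    exact ⟨1 - lin t, lin t, by linarith [(hlinmem t htt).2], (hlinmem t htt).1, by ring, rfl⟩
  have hσsq : ∀ t ∈ Set.Icc t₁ t₂, σ t ∈ unitSquare := fun t htt =>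
    (convex_unitSquare.segment_subset p.2 q.2) (hσseg t htt)
  have hσ1 : σ t₁ = (p : ℝ × ℝ) := by simp [hσ, hlin0]
  have hσ2 : σ t₂ = (q : ℝ × ℝ) := by simp [hσ, hlin1]
  -- the path piece, transported to the square
  set γ : ℝ → ℝ × ℝ := fun t => f (α t) with hγ
  have hγc : ContinuousOn γ (Set.Icc t₁ t₂) := hfc.comp (hα.mono hsub) hmem
  have hγsq : ∀ t ∈ Set.Icc t₁ t₂, γ t ∈ unitSquare := by
    intro t htt
    rw [hγ]
    simp only
    rw [hfval _ (hmem t htt)]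
    exact (e.symm ⟨α t, hmem t htt⟩).2
  have ht₁m : t₁ ∈ Set.Icc t₁ t₂ := ⟨le_refl _, ht.le⟩
  have ht₂m : t₂ ∈ Set.Icc t₁ t₂ := ⟨ht.le, le_refl _⟩
  have hγ1 : γ t₁ = (p : ℝ × ℝ) := by
    rw [hγ]
    simp only
    rw [hfval _ (hmem t₁ ht₁m)]
    have : (⟨α t₁, hmem t₁ ht₁m⟩ : s) = e p := Subtype.ext hp
    rw [this, e.symm_apply_apply]
  have hγ2 : γ t₂ = (q : ℝ × ℝ) := by
    rw [hγ]
    simp only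
    rw [hfval _ (hmem t₂ ht₂m)]
    have : (⟨α t₂, hmem t₂ ht₂m⟩ : s) = e q := Subtype.ext hq
    rw [this, e.symm_apply_apply]
  -- `g (γ t) = α t`
  have hgγ : ∀ t ∈ Set.Icc t₁ t₂, g (γ t) = α t := by
    intro t htt
    rw [hgval _ (hγsq t htt)]
    have hc : (⟨γ t, hγsq t htt⟩ : unitSquare) = e.symm ⟨α t, hmem t htt⟩ := by
      apply Subtype.ext
      simp only [hγ]
      rw [hfval _ (hmem t htt)]
    rw [hc, e.apply_symm_apply]
  -- the straight-line homotopy in the square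
  set G : ℝ × ℝ → ℝ × ℝ := fun z => (1 - z.2) • γ z.1 + z.2 • σ z.1 with hG
  have hGsq : ∀ z ∈ Set.Icc t₁ t₂ ×ˢ Set.Icc (0 : ℝ) 1, G z ∈ unitSquare := by
    intro z hz
    exact convex_unitSquare (hγsq z.1 hz.1) (hσsq z.1 hz.1)
      (by linarith [hz.2.2]) hz.2.1 (by ring)
  have hGc : ContinuousOn G (Set.Icc t₁ t₂ ×ˢ Set.Icc (0 : ℝ) 1) := by
    have h1 : ContinuousOn (fun z : ℝ × ℝ => γ z.1) (Set.Icc t₁ t₂ ×ˢ Set.Icc (0 : ℝ) 1) :=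
      hγc.comp continuous_fst.continuousOn (fun z hz => hz.1)
    have h2 : ContinuousOn (fun z : ℝ × ℝ => σ z.1) (Set.Icc t₁ t₂ ×ˢ Set.Icc (0 : ℝ) 1) :=
      (hσc.comp continuous_fst).continuousOn
    exact ((continuousOn_const.sub continuous_snd.continuousOn).smul h1).add
      (continuous_snd.continuousOn.smul h2)
  -- the homotopy and the new path
  refine ⟨fun t => if t ∈ Set.Ioo t₁ t₂ then g (σ t) else α t, fun z => g (G z), ?_, ?_, ?_, ?_,
    ?_, ?_, ?_, ?_⟩
  · -- continuity of α'
    set α' : ℝ → X := fun t => if t ∈ Set.Ioo t₁ t₂ then g (σ t) else α t with hα'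
    have hEq1 : ∀ t ∈ Set.Icc (0:ℝ) t₁ ∪ Set.Icc t₂ 1, α' t = α t := by
      intro t htt
      rw [hα']
      simp only
      rw [if_neg]
      intro hIoo
      rcases htt with h | h
      · exact absurd h.2 (not_le.mpr hIoo.1)
      · exact absurd h.1 (not_le.mpr hIoo.2)
    have hEq2 : ∀ t ∈ Set.Icc t₁ t₂, α' t = g (σ t) := by
      intro t htt
      rw [hα']
      simp only
      by_cases hIoo : t ∈ Set.Ioo t₁ t₂
      · rw [if_pos hIoo]
      · rw [if_neg hIoo]
        rcases eq_or_lt_of_le htt.1 with h1 | h1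
        · rw [← h1, hσ1, hgval _ p.2, hp]
        rcases eq_or_lt_of_le htt.2 with h2 | h2
        · rw [h2, hσ2, hgval _ q.2, hq]
        · exact absurd ⟨h1, h2⟩ hIoo
    have hcov : Set.Icc (0:ℝ) 1 ⊆ (Set.Icc (0:ℝ) t₁ ∪ Set.Icc t₂ 1) ∪ Set.Icc t₁ t₂ := by
      intro t htt
      by_cases h1 : t ≤ t₁
      · exact Or.inl (Or.inl ⟨htt.1, h1⟩)
      by_cases h2 : t₂ ≤ t
      · exact Or.inl (Or.inr ⟨h2, htt.2⟩)
      · exact Or.inr ⟨le_of_not_ge h1, le_of_not_ge h2⟩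
    have hc1 : ContinuousOn α' (Set.Icc (0:ℝ) t₁ ∪ Set.Icc t₂ 1) := by
      apply ContinuousOn.congr _ hEq1
      apply (hα.mono _).mono
      · exact Set.union_subset (Set.Icc_subset_Icc le_rfl ht₁.2) (Set.Icc_subset_Icc ht₂.1 le_rfl)
      · exact le_rfl
    have hc2 : ContinuousOn α' (Set.Icc t₁ t₂) := by
      apply ContinuousOn.congr _ hEq2
      exact hgc.comp hσc.continuousOn hσsq
    have := continuousOn_union_of_isClosed'
      ((isClosed_Icc.union isClosed_Icc)) isClosed_Icc hc1 hc2
    exact this.mono hcov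
  · -- α' = α outside Ioo
    intro t htt
    simp only [if_neg htt]
  · -- α' lies on the segment
    intro t htt
    refine ⟨σ t, hσseg t htt, hσsq t htt, ?_⟩
    by_cases hIoo : t ∈ Set.Ioo t₁ t₂
    · simp only [if_pos hIoo]
      exact hgval _ (hσsq t htt)
    · simp only [if_neg hIoo]
      rcases eq_or_lt_of_le htt.1 with h1 | h1
      · subst h1
        rw [hp]
        exact congrArg (fun z : unitSquare => (e z : X)) (Subtype.ext hσ1.symm)
      rcases eq_or_lt_of_le htt.2 with h2 | h2
      · subst h2
        rw [hq]
        exact congrArg (fun z : unitSquare => (e z : X)) (Subtype.ext hσ2.symm)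
      · exact absurd ⟨h1, h2⟩ hIoo
  · -- continuity of H
    exact hgc.comp hGc hGsq
  · -- H (t, 0) = α t
    intro t htt
    show g (G (t, 0)) = α t
    have hG0 : G (t, 0) = γ t := by simp [hG]
    rw [hG0, hgγ t htt]
  · -- H (t, 1) = α' t
    intro t htt
    show g (G (t, 1)) = if t ∈ Set.Ioo t₁ t₂ then g (σ t) else α t
    have hG1 : G (t, 1) = σ t := by simp [hG]
    rw [hG1]
    by_cases hIoo : t ∈ Set.Ioo t₁ t₂
    · simp only [if_pos hIoo]
    · simp only [if_neg hIoo]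
      rcases eq_or_lt_of_le htt.1 with h1 | h1
      · rw [← h1, hσ1, hgval _ p.2, hp]
      rcases eq_or_lt_of_le htt.2 with h2 | h2
      · rw [h2, hσ2, hgval _ q.2, hq]
      · exact absurd ⟨h1, h2⟩ hIoo
  · -- endpoints fixed
    intro u hu
    refine ⟨show g (G (t₁, u)) = α t₁ from ?_, show g (G (t₂, u)) = α t₂ from ?_⟩
    · have hGe : G (t₁, u) = (p : ℝ × ℝ) := by
        simp only [hG, hγ1, hσ1]
        rw [← add_smul]
        simp
      rw [hGe, hgval _ p.2, hp]
    · have hGe : G (t₂, u) = (q : ℝ × ℝ) := by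
        simp only [hG, hγ2, hσ2]
        rw [← add_smul]
        simp
      rw [hGe, hgval _ q.2, hq]
  · -- H stays in s
    intro t htt u hu
    right
    show g (G (t, u)) ∈ s
    rw [hgval _ (hGsq (t, u) ⟨htt, hu⟩)]
    exact (e ⟨G (t, u), hGsq (t, u) ⟨htt, hu⟩⟩).2
end

section
/- Let Y be a metric space and f : ∂𝔻 → Y a continuous null-homotopic loop on the boundary circle of the unit disc 𝔻, where Y is a one-dimensional Peano continuum. Then f extends to a continuous map h : 𝔻 → Y with h(𝔻) = f(∂𝔻); in particular diam h(𝔻) = diam f(∂𝔻). -/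
/-- The Lebesgue covering dimension of a space is at most `n`: every open cover admits an
open refinement in which each point lies in at most `n + 1` members. -/
def CoveringDimLE (X : Type*) [TopologicalSpace X] (n : ℕ) : Prop :=
  ∀ (ι : Type) (U : ι → Set X), (∀ i, IsOpen (U i)) → (⋃ i, U i) = Set.univ →
    ∃ (κ : Type) (V : κ → Set X), (∀ k, IsOpen (V k)) ∧ (⋃ k, V k) = Set.univ ∧
      (∀ k, ∃ i, V k ⊆ U i) ∧
      ∀ x : X, {k | x ∈ V k}.Finite ∧ {k | x ∈ V k}.ncard ≤ n + 1

open Metric Set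

set_option linter.unusedSectionVars false
set_option linter.unusedVariables false
set_option maxHeartbeats 1000000

noncomputable section
namespace NullhExt

variable {Y : Type*} [MetricSpace Y] [CompactSpace Y]

lemma shrink2 (hdim : CoveringDimLE Y 1) (A : Option ℕ → Set Y)
    (hA : ∀ o, IsOpen (A o)) (hcov : (⋃ o, A o) = univ) :
    ∃ W : Option ℕ → Set Y, (∀ o, IsOpen (W o)) ∧ (⋃ o, W o) = univ ∧
      (∀ o, W o ⊆ A o) ∧ ∀ x, {o | x ∈ W o}.Finite ∧ {o | x ∈ W o}.ncard ≤ 2 := by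
  obtain ⟨κ, V, hVo, hVcov, href, hord⟩ := hdim (Option ℕ) A hA hcov
  choose φ hφ using href
  refine ⟨fun o => ⋃ k ∈ {k | φ k = o}, V k, ?_, ?_, ?_, ?_⟩
  · intro o; exact isOpen_biUnion fun k _ => hVo k
  · apply eq_univ_of_univ_subset
    intro x _
    have : x ∈ ⋃ k, V k := hVcov ▸ mem_univ x
    obtain ⟨k, hk⟩ := mem_iUnion.1 this
    exact mem_iUnion.2 ⟨φ k, mem_biUnion rfl hk⟩
  · intro o y hy
    obtain ⟨k, hk, hyk⟩ := mem_iUnion₂.1 hy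
    exact hk ▸ hφ k hyk
  · intro x
    obtain ⟨k₀, hk₀⟩ := mem_iUnion.1 (hVcov ▸ mem_univ x : x ∈ ⋃ k, V k)
    set Sx := {o | x ∈ ⋃ k ∈ {k | φ k = o}, V k} with hSx
    classical
    set F : Option ℕ → κ := fun o => if h : ∃ k, φ k = o ∧ x ∈ V k then h.choose else k₀ with hF
    have hmem : ∀ o ∈ Sx, ∃ k, φ k = o ∧ x ∈ V k := by
      intro o ho
      obtain ⟨k, hk, hxk⟩ := mem_iUnion₂.1 ho
      exact ⟨k, hk, hxk⟩
    have hmaps : ∀ o ∈ Sx, F o ∈ {k | x ∈ V k} := by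
      intro o ho
      have h := hmem o ho
      simp only [hF, dif_pos h]
      exact h.choose_spec.2
    have hinj : InjOn F Sx := by
      intro o ho o' ho' heq
      have h := hmem o ho
      have h' := hmem o' ho'
      have e1 : φ (F o) = o := by simp only [hF, dif_pos h]; exact h.choose_spec.1
      have e2 : φ (F o') = o' := by simp only [hF, dif_pos h']; exact h'.choose_spec.1
      rw [← e1, ← e2, heq]
    have hfin : Sx.Finite := by
      refine Set.Finite.of_finite_image ?_ hinj
      exact (hord x).1.subset (image_subset_iff.2 hmaps)
    refine ⟨hfin, ?_⟩
    calc Sx.ncard ≤ {k | x ∈ V k}.ncard :=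
          Set.ncard_le_ncard_of_injOn F hmaps hinj (hord x).1
      _ ≤ 2 := (hord x).2

lemma surgery_step (hdim : CoveringDimLE Y 1) (V : ℕ → Set Y) (hVo : ∀ s, IsOpen (V s))
    (C : Set Y) (hC : IsClosed C) (hCc : C ⊆ ⋃ s, V s) :
    ∃ V' : ℕ → Set Y, (∀ s, IsOpen (V' s)) ∧ (∀ s, V' s ⊆ V s) ∧
      (∀ s, V s \ C ⊆ V' s) ∧ ((⋃ s, V s) ⊆ ⋃ s, V' s) ∧
      ∀ x ∈ C, {s | x ∈ V' s}.Finite ∧ {s | x ∈ V' s}.ncard ≤ 2 := by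
  set A : Option ℕ → Set Y := fun o => o.elim Cᶜ V with hA
  have hAo : ∀ o, IsOpen (A o) := by
    rintro (_ | s)
    · exact hC.isOpen_compl
    · exact hVo s
  have hAcov : (⋃ o, A o) = univ := by
    apply eq_univ_of_univ_subset
    intro x _
    by_cases hx : x ∈ C
    · obtain ⟨s, hs⟩ := mem_iUnion.1 (hCc hx)
      exact mem_iUnion.2 ⟨some s, hs⟩
    · exact mem_iUnion.2 ⟨none, hx⟩
  obtain ⟨W, hWo, hWcov, hWsub, hWord⟩ := shrink2 hdim A hAo hAcov
  refine ⟨fun s => (V s \ C) ∪ W (some s), ?_, ?_, ?_, ?_, ?_⟩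
  · intro s; exact ((hVo s).sdiff hC).union (hWo (some s))
  · intro s
    exact union_subset diff_subset (hWsub (some s))
  · intro s; exact subset_union_left
  · intro x hx
    by_cases hxC : x ∈ C
    · have : x ∈ ⋃ o, W o := hWcov ▸ mem_univ x
      obtain ⟨o, ho⟩ := mem_iUnion.1 this
      match o with
      | none => exact absurd (hWsub none ho) (by simp only [hA]; simpa using hxC)
      | some s => exact mem_iUnion.2 ⟨s, Or.inr ho⟩
    · obtain ⟨s, hs⟩ := mem_iUnion.1 hx
      exact mem_iUnion.2 ⟨s, Or.inl ⟨hs, hxC⟩⟩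
  · intro x hxC
    have hmem : ∀ s, x ∈ (V s \ C) ∪ W (some s) ↔ x ∈ W (some s) := by
      intro s
      constructor
      · rintro (⟨_, hnc⟩ | h)
        · exact absurd hxC hnc
        · exact h
      · exact Or.inr
    have hsub2 : {s | x ∈ (V s \ C) ∪ W (some s)} = {s : ℕ | x ∈ W (some s)} := by
      ext s; exact hmem s
    rw [hsub2]
    have hmaps : ∀ s ∈ {s : ℕ | x ∈ W (some s)}, (some s : Option ℕ) ∈ {o | x ∈ W o} :=
      fun s hs => hs
    have hinj : InjOn (fun s : ℕ => (some s : Option ℕ)) {s : ℕ | x ∈ W (some s)} := by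
      intro a _ b _ h; exact Option.some_injective ℕ h
    refine ⟨?_, ?_⟩
    · refine Set.Finite.of_finite_image ?_ hinj
      exact (hWord x).1.subset (image_subset_iff.2 hmaps)
    · calc _ ≤ {o | x ∈ W o}.ncard := Set.ncard_le_ncard_of_injOn _ hmaps hinj (hWord x).1
        _ ≤ 2 := (hWord x).2

lemma exists_final_cover (hdim : CoveringDimLE Y 1) (Ucov : ℕ → Set Y)
    (hUo : ∀ s, IsOpen (Ucov s)) (C : ℕ → Set Y) (hCcl : ∀ m, IsClosed (C m))
    (hCU : ∀ m, C m ⊆ ⋃ s, Ucov s)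
    (hcovC : ∀ x ∈ ⋃ s, Ucov s, ∃ m, x ∈ C m)
    (hloc : ∀ x ∈ ⋃ s, Ucov s, ∃ ε > 0, {m | (C m ∩ ball x ε).Nonempty}.Finite) :
    ∃ V : ℕ → Set Y, (∀ s, IsOpen (V s)) ∧ (∀ s, V s ⊆ Ucov s) ∧
      ((⋃ s, Ucov s) ⊆ ⋃ s, V s) ∧
      ∀ x ∈ ⋃ s, Ucov s, {s | x ∈ V s}.Finite ∧ {s | x ∈ V s}.ncard ≤ 2 := by
  classical
  -- Good covers
  set Good : (ℕ → Set Y) → Prop :=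
    fun V => (∀ s, IsOpen (V s)) ∧ (∀ s, V s ⊆ Ucov s) ∧ ((⋃ s, Ucov s) ⊆ ⋃ s, V s)
    with hGood
  have good0 : Good Ucov := ⟨hUo, fun s => subset_rfl, subset_rfl⟩
  have hstep : ∀ W : {V : ℕ → Set Y // Good V}, ∀ m : ℕ, ∃ V' : ℕ → Set Y, Good V' ∧
      (∀ s, V' s ⊆ W.1 s) ∧ (∀ s, W.1 s \ C m ⊆ V' s) ∧
      (∀ x ∈ C m, {s | x ∈ V' s}.Finite ∧ {s | x ∈ V' s}.ncard ≤ 2) := by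
    rintro ⟨W, hWo, hWsub, hWcov⟩ m
    obtain ⟨V', h1, h2, h3, h4, h5⟩ :=
      surgery_step hdim W hWo (C m) (hCcl m) ((hCU m).trans hWcov)
    exact ⟨V', ⟨h1, fun s => (h2 s).trans (hWsub s), hWcov.trans h4⟩, h2, h3, h5⟩
  set nxt : {V : ℕ → Set Y // Good V} → ℕ → {V : ℕ → Set Y // Good V} :=
    fun W m => ⟨(hstep W m).choose, (hstep W m).choose_spec.1⟩ with hnxt
  set seq : ℕ → {V : ℕ → Set Y // Good V} :=
    fun m => Nat.rec ⟨Ucov, good0⟩ (fun m ih => nxt ih m) m with hseq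
  have hseq0 : (seq 0).1 = Ucov := rfl
  have hspec : ∀ m, (∀ s, (seq (m+1)).1 s ⊆ (seq m).1 s) ∧
      (∀ s, (seq m).1 s \ C m ⊆ (seq (m+1)).1 s) ∧
      (∀ x ∈ C m, {s | x ∈ (seq (m+1)).1 s}.Finite ∧ {s | x ∈ (seq (m+1)).1 s}.ncard ≤ 2) := by
    intro m
    have : seq (m+1) = nxt (seq m) m := rfl
    rw [this]
    exact (hstep (seq m) m).choose_spec.2
  have hmono : ∀ {m m'}, m ≤ m' → ∀ s, (seq m').1 s ⊆ (seq m).1 s := by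
    intro m m' h
    induction h with
    | refl => exact fun s => subset_rfl
    | @step m'' h ih => exact fun s => ((hspec m'').1 s).trans (ih s)
  -- the limit cover
  set Vf : ℕ → Set Y := fun s => ⋂ m, (seq m).1 s with hVf
  have hVfsub : ∀ m s, Vf s ⊆ (seq m).1 s := fun m s => iInter_subset _ m
  have hVfU : ∀ s, Vf s ⊆ Ucov s := fun s => (hVfsub 0 s).trans (by rw [hseq0])
  -- stabilization near any point of the union
  have hstab : ∀ x ∈ ⋃ s, Ucov s, ∃ ε > 0, ∃ M : ℕ, ∀ s,
      Vf s ∩ ball x ε = (seq M).1 s ∩ ball x ε := by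
    intro x hx
    obtain ⟨ε, hε, hfin⟩ := hloc x hx
    -- find M beyond which the ball misses all C m
    obtain ⟨M, hM⟩ : ∃ M : ℕ, ∀ m, M ≤ m → C m ∩ ball x ε = ∅ := by
      by_cases hne : {m | (C m ∩ ball x ε).Nonempty}.Nonempty
      · have hbdd := hfin.bddAbove
        obtain ⟨B, hB⟩ := hbdd
        refine ⟨B + 1, fun m hm => ?_⟩
        by_contra hcon
        have : m ∈ {m | (C m ∩ ball x ε).Nonempty} := nonempty_iff_ne_empty.2 hcon
        have := hB this
        omega
      · refine ⟨0, fun m _ => ?_⟩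
        by_contra hcon
        exact hne ⟨m, nonempty_iff_ne_empty.2 hcon⟩
    refine ⟨ε, hε, M, fun s => ?_⟩
    have hstay : ∀ m, M ≤ m → (seq m).1 s ∩ ball x ε = (seq M).1 s ∩ ball x ε := by
      intro m hm
      induction hm with
      | refl => rfl
      | @step m' h' ih =>
                     rw [← ih]
                     apply subset_antisymm
                     · exact inter_subset_inter_left _ ((hspec m').1 s)
                     · rintro y ⟨hy1, hy2⟩
                       refine ⟨(hspec m').2.1 s ⟨hy1, fun hyC => ?_⟩, hy2⟩
                       have : y ∈ C m' ∩ ball x ε := ⟨hyC, hy2⟩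
                       rw [hM m' h'] at this
                       exact this
    apply subset_antisymm
    · exact inter_subset_inter_left _ (hVfsub M s)
    · rintro y ⟨hy1, hy2⟩
      refine ⟨mem_iInter.2 fun m => ?_, hy2⟩
      rcases le_or_gt M m with h | h
      · have := hstay m h
        have : y ∈ (seq m).1 s ∩ ball x ε := this ▸ ⟨hy1, hy2⟩
        exact this.1
      · exact hmono h.le s hy1
  refine ⟨Vf, ?_, hVfU, ?_, ?_⟩
  · -- openness
    intro s
    rw [isOpen_iff_mem_nhds]
    intro x hx
    have hxU : x ∈ ⋃ s, Ucov s := mem_iUnion.2 ⟨s, hVfU s hx⟩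
    obtain ⟨ε, hε, M, hM⟩ := hstab x hxU
    have : Vf s ∩ ball x ε ∈ nhds x := by
      rw [hM s]
      exact Filter.inter_mem (((seq M).2.1 s).mem_nhds ((hM s ▸ ⟨hx, mem_ball_self hε⟩ :
        x ∈ (seq M).1 s ∩ ball x ε)).1) (ball_mem_nhds x hε)
    exact Filter.mem_of_superset this inter_subset_left
  · -- covering
    intro x hx
    obtain ⟨ε, hε, M, hM⟩ := hstab x hx
    have : x ∈ ⋃ s, (seq M).1 s := (seq M).2.2.2 hx
    obtain ⟨s, hs⟩ := mem_iUnion.1 this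
    refine mem_iUnion.2 ⟨s, ?_⟩
    have : x ∈ (seq M).1 s ∩ ball x ε := ⟨hs, mem_ball_self hε⟩
    rw [← hM s] at this
    exact this.1
  · -- order
    intro x hx
    obtain ⟨m, hm⟩ := hcovC x hx
    have hsub : {s | x ∈ Vf s} ⊆ {s | x ∈ (seq (m+1)).1 s} :=
      fun s hs => hVfsub (m+1) s hs
    obtain ⟨hfin, hcard⟩ := (hspec m).2.2 x hm
    exact ⟨hfin.subset hsub, (Set.ncard_le_ncard hsub hfin).trans hcard⟩

def shells (K : Set Y) : ℕ → Set Y := fun m =>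
  if m = 0 then {y | 1/8 ≤ infDist y K}
  else {y | (1/2:ℝ)^(m+1) ≤ infDist y K ∧ infDist y K ≤ (1/2:ℝ)^m}

lemma shells_closed (K : Set Y) (m : ℕ) : IsClosed (shells K m) := by
  unfold shells
  split
  · exact isClosed_le continuous_const (continuous_infDist_pt K)
  · exact IsClosed.inter (isClosed_le continuous_const (continuous_infDist_pt K))
      (isClosed_le (continuous_infDist_pt K) continuous_const)

lemma shells_low (K : Set Y) (m : ℕ) {y : Y} (hy : y ∈ shells K m) :
    (1/2:ℝ)^(m+3) ≤ infDist y K := by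
  unfold shells at hy
  by_cases h : m = 0
  · subst h; rw [if_pos rfl] at hy
    calc (1/2:ℝ)^(0+3) = 1/8 := by norm_num
      _ ≤ _ := hy
  · rw [if_neg h] at hy
    calc (1/2:ℝ)^(m+3) ≤ (1/2:ℝ)^(m+1) := by
          apply pow_le_pow_of_le_one (by norm_num) (by norm_num); omega
      _ ≤ _ := hy.1

lemma shells_subset_compl (K : Set Y) (hK : IsCompact K) (hne : K.Nonempty) (m : ℕ) :
    shells K m ⊆ Kᶜ := by
  intro y hy
  have h := shells_low K m hy
  have hpos : (0:ℝ) < (1/2:ℝ)^(m+3) := by positivity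
  intro hyK
  have : infDist y K = 0 := infDist_zero_of_mem hyK
  linarith

lemma shells_cover (K : Set Y) (hK : IsCompact K) (hne : K.Nonempty) {x : Y} (hx : x ∉ K) :
    ∃ m, x ∈ shells K m := by
  have hd : 0 < infDist x K := (hK.isClosed.notMem_iff_infDist_pos hne).1 hx
  set d := infDist x K with hdd
  rcases le_or_gt (1/8 : ℝ) d with h | h
  · exact ⟨0, by unfold shells; rw [if_pos rfl]; exact h⟩
  · have hex : ∃ n : ℕ, (1/2:ℝ)^n < d := exists_pow_lt_of_lt_one hd (by norm_num)
    classical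
    set n₀ := Nat.find hex with hn₀
    have hfind : (1/2:ℝ)^n₀ < d := Nat.find_spec hex
    have hmin : ∀ k, k < n₀ → ¬ ((1/2:ℝ)^k < d) := fun k hk => Nat.find_min hex hk
    have h2 : 2 ≤ n₀ := by
      by_contra hcon
      push_neg at hcon
      interval_cases n₀
      · exact absurd hfind (by push_neg; nlinarith)
      · exact absurd hfind (by push_neg; nlinarith)
    refine ⟨n₀ - 1, ?_⟩
    unfold shells
    rw [if_neg (by omega)]
    constructor
    · have : n₀ - 1 + 1 = n₀ := by omega
      rw [this]; exact hfind.le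
    · have := hmin (n₀ - 1) (by omega)
      push_neg at this
      exact this

lemma shells_locfin (K : Set Y) (hK : IsCompact K) (hne : K.Nonempty) {x : Y} (hx : x ∉ K) :
    ∃ ε > 0, {m | (shells K m ∩ ball x ε).Nonempty}.Finite := by
  have hd : 0 < infDist x K := (hK.isClosed.notMem_iff_infDist_pos hne).1 hx
  set d := infDist x K with hdd
  obtain ⟨M, hM⟩ : ∃ M : ℕ, (1/2:ℝ)^M < d/2 := exists_pow_lt_of_lt_one (by linarith) (by norm_num)
  refine ⟨d/2, by linarith, Set.Finite.subset (Set.finite_Iic M) ?_⟩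
  rintro m ⟨z, hz1, hz2⟩
  simp only [Set.mem_Iic]
  by_contra hcon
  push_neg at hcon
  have hm1 : m ≠ 0 := by omega
  have hup : infDist z K ≤ (1/2:ℝ)^m := by
    unfold shells at hz1; rw [if_neg hm1] at hz1; exact hz1.2
  have h1 : d ≤ infDist z K + dist x z := infDist_le_infDist_add_dist
  have h2 : dist x z < d/2 := by rw [dist_comm]; exact mem_ball.1 hz2
  have h3 : (1/2:ℝ)^m ≤ (1/2:ℝ)^M :=
    pow_le_pow_of_le_one (by norm_num) (by norm_num) (by omega)
  linarith


/-- Whitney-type cover of the complement of `K`, with anchor points in `K`. -/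
lemma exists_whitney (K : Set Y) (hK : IsCompact K) (hne : K.Nonempty) :
    ∃ (Ucov : ℕ → Set Y) (a : ℕ → Y),
      (∀ s, IsOpen (Ucov s)) ∧ (⋃ s, Ucov s) = Kᶜ ∧ (∀ s, a s ∈ K) ∧
      (∀ s, ∀ y ∈ Ucov s, dist y (a s) ≤ 2 * infDist y K) ∧
      (∀ x ∉ K, ∃ ε > 0, {s | (Ucov s ∩ ball x ε).Nonempty}.Finite) := by
  classical
  set ρ : ℕ → ℝ := fun m => (1/2:ℝ)^(m+6) with hρ
  have hρpos : ∀ m, 0 < ρ m := fun m => by positivity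
  -- finite lists of centers covering each shell
  have hLex : ∀ m, ∃ L : List Y, (∀ c ∈ L, c ∈ shells K m) ∧
      shells K m ⊆ ⋃ c ∈ L, ball c (ρ m) := by
    intro m
    have hcomp : IsCompact (shells K m) := (shells_closed K m).isCompact
    obtain ⟨t, ht⟩ := hcomp.elim_finite_subcover
      (fun c : ↥(shells K m) => ball (c : Y) (ρ m)) (fun _ => isOpen_ball)
      (fun x hx => mem_iUnion.2 ⟨⟨x, hx⟩, mem_ball_self (hρpos m)⟩)
    refine ⟨t.toList.map Subtype.val, ?_, ?_⟩
    · intro c hc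
      simp only [List.mem_map, Finset.mem_toList] at hc
      obtain ⟨⟨c', hc'⟩, _, rfl⟩ := hc
      exact hc'
    · intro x hx
      obtain ⟨i, hit, hxi⟩ := mem_iUnion₂.1 (ht hx)
      refine mem_iUnion₂.2 ⟨(i : Y), ?_, hxi⟩
      simp only [List.mem_map, Finset.mem_toList]
      exact ⟨i, hit, rfl⟩
  choose L hL1 hL2 using hLex
  -- the cover (centers via getD to avoid dependent indexing)
  set cent : ℕ → Y := fun s =>
    (L (Nat.unpair s).1).getD (Nat.unpair s).2 hne.choose with hcent
  set Ucov : ℕ → Set Y := fun s =>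
    if (Nat.unpair s).2 < (L (Nat.unpair s).1).length
    then ball (cent s) (ρ (Nat.unpair s).1) else ∅ with hUcov
  have hcentmem : ∀ s : ℕ, (Nat.unpair s).2 < (L (Nat.unpair s).1).length →
      cent s ∈ shells K (Nat.unpair s).1 := by
    intro s h
    have : cent s = (L (Nat.unpair s).1).get ⟨(Nat.unpair s).2, h⟩ := by
      simp only [hcent]
      exact List.getD_eq_get _ _ ⟨(Nat.unpair s).2, h⟩
    rw [this]
    exact hL1 _ _ (List.get_mem _ ⟨(Nat.unpair s).2, h⟩)
  have hpairU : ∀ (m : ℕ) (i : Fin (L m).length),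
      Ucov (Nat.pair m i) = ball ((L m).get i) (ρ m) := by
    intro m i
    simp only [hUcov, hcent, Nat.unpair_pair]
    rw [if_pos i.isLt]
    have : (L m).getD (↑i) (Exists.choose hne) = (L m).get i := by
      rw [List.getD_eq_get _ _ i]
    rw [this]
  -- anchors
  have hanch : ∀ s, ∃ z ∈ K, infDist (cent s) K = dist (cent s) z :=
    fun s => hK.exists_infDist_eq_dist hne (cent s)
  choose a haK hadist using hanch
  -- refined description
  have hUdesc2 : ∀ s : ℕ, Ucov s = ∅ ∨ ∃ m : ℕ, cent s ∈ shells K m ∧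
      Ucov s = ball (cent s) (ρ m) := by
    intro s
    by_cases h : (Nat.unpair s).2 < (L (Nat.unpair s).1).length
    · right
      exact ⟨(Nat.unpair s).1, hcentmem s h, by simp only [hUcov]; rw [if_pos h]⟩
    · left; simp only [hUcov]; rw [if_neg h]
  have hOpen : ∀ s, IsOpen (Ucov s) := by
    intro s
    rcases hUdesc2 s with h | ⟨m, _, h⟩
    · rw [h]; exact isOpen_empty
    · rw [h]; exact isOpen_ball
  -- key distance estimates for a point of `Ucov s`
  have hkey : ∀ s, ∀ y ∈ Ucov s, ∃ m : ℕ,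
      dist y (cent s) < ρ m ∧ (1/2:ℝ)^(m+3) ≤ infDist (cent s) K := by
    intro s y hy
    rcases hUdesc2 s with h | ⟨m, hc, h⟩
    · rw [h] at hy; exact absurd hy (notMem_empty y)
    · rw [h] at hy
      exact ⟨m, mem_ball.1 hy, shells_low K m hc⟩
  have hUKc : (⋃ s, Ucov s) = Kᶜ := by
    apply subset_antisymm
    · intro y hy
      obtain ⟨s, hs⟩ := mem_iUnion.1 hy
      obtain ⟨m, h1, h2⟩ := hkey s y hs
      have h3 : infDist (cent s) K ≤ infDist y K + dist (cent s) y :=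
        infDist_le_infDist_add_dist
      have hρm : ρ m ≤ (1/2:ℝ)^(m+3) * (1/8 : ℝ) := by
        simp only [hρ]
        rw [show m + 6 = (m+3) + 3 by omega, pow_add]
        gcongr <;> norm_num
      have hpos : (0:ℝ) < (1/2:ℝ)^(m+3) := by positivity
      have : 0 < infDist y K := by
        rw [dist_comm] at h1
        nlinarith
      intro hyK
      have : infDist y K = 0 := infDist_zero_of_mem hyK
      linarith
    · intro x hx
      obtain ⟨m, hm⟩ := shells_cover K hK hne hx
      obtain ⟨c, hcL, hxc⟩ := mem_iUnion₂.1 (hL2 m hm)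
      obtain ⟨i, hi⟩ := List.mem_iff_get.1 hcL
      refine mem_iUnion.2 ⟨Nat.pair m i, ?_⟩
      rw [hpairU m i, hi]
      exact hxc
  -- anchor distance property
  have h4 : ∀ s, ∀ y ∈ Ucov s, dist y (a s) ≤ 2 * infDist y K := by
    intro s y hy
    rcases hUdesc2 s with h | ⟨m, hc, h⟩
    · rw [h] at hy; exact absurd hy (notMem_empty y)
    · rw [h] at hy
      have h1 : dist y (cent s) < ρ m := mem_ball.1 hy
      have hD : infDist (cent s) K = dist (cent s) (a s) := hadist s
      have hlow : (1/2:ℝ)^(m+3) ≤ infDist (cent s) K := shells_low K m hc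
      have hρ8 : ρ m * 8 = (1/2:ℝ)^(m+3) := by
        simp only [hρ]
        rw [show m + 6 = (m+3) + 3 by omega, pow_add]
        ring
      have hDy : infDist (cent s) K ≤ infDist y K + dist (cent s) y :=
        infDist_le_infDist_add_dist
      have htri : dist y (a s) ≤ dist y (cent s) + dist (cent s) (a s) := dist_triangle _ _ _
      rw [dist_comm (cent s) y] at hDy
      have hpos := hρpos m
      linarith
  -- local finiteness
  have h5 : ∀ x ∉ K, ∃ ε > 0, {s | (Ucov s ∩ ball x ε).Nonempty}.Finite := by
    intro x hx
    have hd : 0 < infDist x K := (hK.isClosed.notMem_iff_infDist_pos hne).1 hx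
    obtain ⟨M, hM⟩ : ∃ M : ℕ, (1/2:ℝ)^M < infDist x K / 4 :=
      exists_pow_lt_of_lt_one (by linarith) (by norm_num)
    set Lmax := (Finset.range (M+1)).sup (fun m => (L m).length) with hLmax
    have hfin : ((Set.Iic M) ×ˢ (Set.Iio Lmax)).Finite :=
      (Set.finite_Iic M).prod (Set.finite_Iio Lmax)
    refine ⟨infDist x K / 4, by linarith, Set.Finite.subset
      (hfin.image (fun p : ℕ × ℕ => Nat.pair p.1 p.2)) ?_⟩
    rintro s ⟨z, hz1, hz2⟩
    have hprop : (Nat.unpair s).2 < (L (Nat.unpair s).1).length := by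
      by_contra hcon
      simp only [hUcov] at hz1
      rw [if_neg hcon] at hz1
      exact notMem_empty z hz1
    have hz1' : z ∈ ball (cent s) (ρ (Nat.unpair s).1) := by
      simp only [hUcov] at hz1
      rwa [if_pos hprop] at hz1
    have hcm : cent s ∈ shells K (Nat.unpair s).1 := hcentmem s hprop
    have hm : (Nat.unpair s).1 ≤ M := by
      by_contra hcon
      push_neg at hcon
      set m := (Nat.unpair s).1 with hmdef
      have hm0 : m ≠ 0 := by omega
      have hup : infDist (cent s) K ≤ (1/2:ℝ)^m := by
        unfold shells at hcm
        rw [if_neg hm0] at hcm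
        exact hcm.2
      have e1 : infDist x K ≤ infDist (cent s) K + dist x (cent s) :=
        infDist_le_infDist_add_dist
      have e2 : dist x (cent s) ≤ dist x z + dist z (cent s) := dist_triangle _ _ _
      have e3 : dist z (cent s) < ρ m := mem_ball.1 hz1'
      have e4 : dist x z < infDist x K / 4 := by rw [dist_comm]; exact mem_ball.1 hz2
      have e5 : ρ m ≤ (1/2:ℝ)^m :=
        pow_le_pow_of_le_one (by norm_num) (by norm_num) (by omega)
      have e6 : (1/2:ℝ)^m ≤ (1/2:ℝ)^(M+1) :=
        pow_le_pow_of_le_one (by norm_num) (by norm_num) (by omega)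
      have e7 : (1/2:ℝ)^(M+1) = (1/2:ℝ)^M * (1/2) := by rw [pow_succ]
      linarith
    have hmemr : (Nat.unpair s).1 ∈ Finset.range (M+1) := Finset.mem_range.2 (by omega)
    have hlen : (L (Nat.unpair s).1).length ≤ Lmax :=
      Finset.le_sup (f := fun m => (L m).length) hmemr
    exact ⟨((Nat.unpair s).1, (Nat.unpair s).2),
      ⟨Set.mem_Iic.2 hm, Set.mem_Iio.2 (lt_of_lt_of_le hprop hlen)⟩, Nat.pair_unpair s⟩
  exact ⟨Ucov, a, hOpen, hUKc, haK, h4, h5⟩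

lemma exists_path_family (K : Set Y)
    (hglob : ∀ x ∈ K, ∀ y ∈ K, JoinedIn K x y)
    (hP : ∀ n : ℕ, ∃ δ > 0, ∀ x ∈ K, ∀ y ∈ K, dist x y < δ →
      ∃ p : Path x y, (∀ t, p t ∈ K) ∧ ∀ t u, dist (p t) (p u) ≤ (1/2 : ℝ)^n) :
    ∃ δ : ℕ → ℝ, (∀ n, 0 < δ n) ∧
      ∀ x, ∀ hx : x ∈ K, ∀ y, ∀ hy : y ∈ K, ∃ p : ℝ → Y, Continuous p ∧
        (∀ t, p t ∈ K) ∧ (∀ t, t ≤ 0 → p t = x) ∧ (∀ t, 1 ≤ t → p t = y) ∧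
        ∀ n, dist x y < δ n → ∀ t u, dist (p t) (p u) ≤ (1/2 : ℝ)^n := by
  classical
  choose δ₀ hδ₀pos hδ₀ using hP
  set δ : ℕ → ℝ := fun n =>
    min ((1/2:ℝ)^n) ((Finset.range (n+1)).inf' ⟨0, Finset.mem_range.2 (by omega)⟩ δ₀) with hδ
  have hδpos : ∀ n, 0 < δ n := by
    intro n
    apply lt_min (by positivity)
    apply (Finset.lt_inf'_iff _).2
    intro k _
    exact hδ₀pos k
  have hδle : ∀ n, δ n ≤ δ₀ n :=
    fun n => (min_le_right _ _).trans (Finset.inf'_le _ (Finset.mem_range.2 (by omega)))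
  have hδle2 : ∀ n, δ n ≤ (1/2:ℝ)^n := fun n => min_le_left _ _
  refine ⟨δ, hδpos, ?_⟩
  intro x hx y hy
  -- helper to turn a `Path` into an extended function
  by_cases hxy : x = y
  · subst hxy
    exact ⟨fun _ => x, continuous_const, fun _ => hx, fun _ _ => rfl, fun _ _ => rfl,
      fun n _ t u => by simpa using by positivity⟩
  · have hd : 0 < dist x y := dist_pos.2 hxy
    set S := {n : ℕ | dist x y < δ n} with hS
    have hbdd : BddAbove S := by
      obtain ⟨N, hN⟩ : ∃ N : ℕ, (1/2:ℝ)^N < dist x y := exists_pow_lt_of_lt_one hd (by norm_num)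
      refine ⟨N, fun n hn => ?_⟩
      by_contra hcon
      push_neg at hcon
      have : (1/2:ℝ)^n ≤ (1/2:ℝ)^N :=
        pow_le_pow_of_le_one (by norm_num) (by norm_num) (by omega)
      have := hn.trans_le (hδle2 n)
      linarith [hn.trans_le (hδle2 n)]
    by_cases hSne : S.Nonempty
    · set M := sSup S with hM
      have hMS : M ∈ S := Nat.sSup_mem hSne hbdd
      obtain ⟨p, hpK, hpd⟩ := hδ₀ M x hx y hy (lt_of_lt_of_le hMS (hδle M))
      refine ⟨p.extend, p.continuous_extend, ?_, ?_, ?_, ?_⟩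
      · intro t
        have : p.extend t ∈ range p.extend := mem_range_self t
        rw [p.extend_range] at this
        obtain ⟨u, hu⟩ := this
        rw [← hu]; exact hpK u
      · intro t ht; exact p.extend_of_le_zero ht
      · intro t ht; exact p.extend_of_one_le ht
      · intro n hn t u
        have hnS : n ∈ S := hn
        have hnM : n ≤ M := le_csSup hbdd hnS
        have h2 : (1/2:ℝ)^M ≤ (1/2:ℝ)^n :=
          pow_le_pow_of_le_one (by norm_num) (by norm_num) hnM
        -- both extend values are values of p
        have h3 : p.extend t ∈ range p := by rw [← p.extend_range]; exact mem_range_self t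
        have h4 : p.extend u ∈ range p := by rw [← p.extend_range]; exact mem_range_self u
        obtain ⟨t', ht'⟩ := h3
        obtain ⟨u', hu'⟩ := h4
        rw [← ht', ← hu']
        exact (hpd t' u').trans h2
    · obtain ⟨p, hpK⟩ := hglob x hx y hy
      refine ⟨p.extend, p.continuous_extend, ?_, ?_, ?_, ?_⟩
      · intro t
        have : p.extend t ∈ range p.extend := mem_range_self t
        rw [p.extend_range] at this
        obtain ⟨u, hu⟩ := this
        rw [← hu]; exact hpK u
      · intro t ht; exact p.extend_of_le_zero ht
      · intro t ht; exact p.extend_of_one_le ht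
      · intro n hn t u
        exact absurd (show n ∈ S from hn) (fun h => hSne ⟨n, h⟩)

lemma unit_proj_bound {E : Type*} [NormedAddCommGroup E] [NormedSpace ℝ E] {v w : E}
    (hv : 1/2 ≤ ‖v‖) (hw : 1/2 ≤ ‖w‖) :
    ‖‖v‖⁻¹ • v - ‖w‖⁻¹ • w‖ ≤ 4 * ‖v - w‖ := by
  have hv0 : (0:ℝ) < ‖v‖ := by linarith
  have hw0 : (0:ℝ) < ‖w‖ := by linarith
  have h1 : ‖v‖⁻¹ • v - ‖w‖⁻¹ • w = ‖v‖⁻¹ • (v - w) + (‖v‖⁻¹ - ‖w‖⁻¹) • w := by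
    rw [smul_sub, sub_smul]; abel
  have h2 : ‖‖v‖⁻¹ • v - ‖w‖⁻¹ • w‖ ≤ ‖v‖⁻¹ * ‖v - w‖ + |‖v‖⁻¹ - ‖w‖⁻¹| * ‖w‖ := by
    rw [h1]
    refine (norm_add_le _ _).trans ?_
    rw [norm_smul, norm_smul, Real.norm_eq_abs, Real.norm_eq_abs, abs_of_pos (by positivity)]
  have h3 : |‖v‖⁻¹ - ‖w‖⁻¹| * ‖w‖ = |‖w‖ - ‖v‖| * ‖v‖⁻¹ := by
    have : ‖v‖⁻¹ - ‖w‖⁻¹ = (‖w‖ - ‖v‖) * (‖v‖⁻¹ * ‖w‖⁻¹) := by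
      field_simp
    rw [this, abs_mul, abs_mul, abs_of_pos (show (0:ℝ) < ‖v‖⁻¹ by positivity),
      abs_of_pos (show (0:ℝ) < ‖w‖⁻¹ by positivity)]
    field_simp
  have h4 : |‖w‖ - ‖v‖| ≤ ‖v - w‖ :=
    (abs_norm_sub_norm_le w v).trans (le_of_eq (norm_sub_rev w v))
  have h5 : ‖v‖⁻¹ ≤ 2 := by
    rw [inv_le_comm₀ hv0 (by norm_num)]
    linarith
  have hnn : (0:ℝ) ≤ ‖v - w‖ := norm_nonneg _
  have hnn2 : (0:ℝ) ≤ |‖w‖ - ‖v‖| := abs_nonneg _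
  calc ‖‖v‖⁻¹ • v - ‖w‖⁻¹ • w‖ ≤ ‖v‖⁻¹ * ‖v - w‖ + |‖w‖ - ‖v‖| * ‖v‖⁻¹ := by
        rw [← h3]; exact h2
    _ ≤ 2 * ‖v - w‖ + ‖v - w‖ * 2 := by
        have := mul_le_mul h5 (le_refl ‖v - w‖) hnn (by norm_num)
        have h6 : |‖w‖ - ‖v‖| * ‖v‖⁻¹ ≤ ‖v - w‖ * 2 :=
          mul_le_mul h4 h5 (by positivity) hnn
        nlinarith
    _ = 4 * ‖v - w‖ := by ring

local notation "SS" => Metric.sphere (0 : ℝ × ℝ) 1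

lemma smallPathsS : ∀ τ > (0:ℝ), ∃ η > (0:ℝ), ∀ a ∈ SS, ∀ b ∈ SS, dist a b < η →
    ∃ σ : ℝ → ℝ × ℝ, Continuous σ ∧ (∀ t, σ t ∈ SS) ∧ (∀ t, t ≤ 0 → σ t = a) ∧
      (∀ t, 1 ≤ t → σ t = b) ∧ ∀ t u, dist (σ t) (σ u) ≤ τ := by
  intro τ hτ
  refine ⟨min (τ/8) (1/2), by positivity, ?_⟩
  intro a ha b hb hab
  have hna : ‖a‖ = 1 := by simpa using ha
  have hnb : ‖b‖ = 1 := by simpa using hb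
  have habn : ‖a - b‖ < min (τ/8) (1/2) := by rwa [← dist_eq_norm]
  set c : ℝ → ℝ := fun t => max 0 (min 1 t) with hc
  have hc0 : ∀ t, 0 ≤ c t := fun t => le_max_left _ _
  have hc1 : ∀ t, c t ≤ 1 := fun t => max_le (by norm_num) (min_le_left _ _)
  have hccont : Continuous c := continuous_const.max (continuous_const.min continuous_id)
  set seg : ℝ → ℝ × ℝ := fun t => a + c t • (b - a) with hseg
  have hsegcont : Continuous seg := continuous_const.add (hccont.smul continuous_const)
  have hseglow : ∀ t, 1/2 ≤ ‖seg t‖ := by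
    intro t
    have h1 : ‖c t • (b - a)‖ ≤ ‖b - a‖ := by
      rw [norm_smul, Real.norm_eq_abs, abs_of_nonneg (hc0 t)]
      nlinarith [norm_nonneg (b - a), hc1 t]
    have h2 : ‖a‖ - ‖c t • (b - a)‖ ≤ ‖seg t‖ := by
      have h2a : ‖a‖ ≤ ‖a + c t • (b - a)‖ + ‖c t • (b - a)‖ := by
        have := norm_add_le (a + c t • (b - a)) (-(c t • (b - a)))
        simpa using this
      simp only [hseg]
      linarith [h2a]
    have h3 : ‖b - a‖ < 1/2 := by
      rw [norm_sub_rev]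
      exact habn.trans_le (min_le_right _ _)
    rw [hna] at h2
    linarith
  set σ : ℝ → ℝ × ℝ := fun t => ‖seg t‖⁻¹ • seg t with hσ
  have hnz : ∀ t, ‖seg t‖ ≠ 0 := fun t => by have := hseglow t; positivity
  refine ⟨σ, ?_, ?_, ?_, ?_, ?_⟩
  · exact ((hsegcont.norm).inv₀ hnz).smul hsegcont
  · intro t
    simp only [mem_sphere_iff_norm, sub_zero, hσ, norm_smul, Real.norm_eq_abs,
      abs_of_pos (show (0:ℝ) < ‖seg t‖⁻¹ by have := hseglow t; positivity)]
    field_simp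
    exact div_self (hnz t)
  · intro t ht
    have hct : c t = 0 := by
      simp only [hc]
      rw [max_eq_left]
      exact (min_le_right _ _).trans ht
    simp only [hσ, hseg, hct, zero_smul, add_zero, hna]
    norm_num
  · intro t ht
    have hct : c t = 1 := by
      simp only [hc]
      rw [min_eq_left ht, max_eq_right (by norm_num)]
    simp only [hσ, hseg, hct, one_smul]
    have : a + (b - a) = b := by abel
    rw [this, hnb]
    norm_num
  · intro t u
    have hd : dist (σ t) (σ u) = ‖‖seg t‖⁻¹ • seg t - ‖seg u‖⁻¹ • seg u‖ := dist_eq_norm _ _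
    rw [hd]
    refine (unit_proj_bound (hseglow t) (hseglow u)).trans ?_
    have hsegdiff : ‖seg t - seg u‖ ≤ ‖a - b‖ := by
      have : seg t - seg u = (c t - c u) • (b - a) := by
        simp only [hseg]
        rw [sub_smul]; abel
      rw [this, norm_smul, Real.norm_eq_abs, norm_sub_rev]
      have h1 : |c t - c u| ≤ 1 := by
        rw [abs_le]
        constructor <;> nlinarith [hc0 t, hc1 t, hc0 u, hc1 u]
      nlinarith [norm_nonneg (a - b), abs_nonneg (c t - c u)]
    have : ‖a - b‖ ≤ τ/8 := le_of_lt (habn.trans_le (min_le_left _ _))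
    linarith [norm_nonneg (seg t - seg u)]


lemma K_ulpc {Y : Type*} [MetricSpace Y] (f : ℝ × ℝ → Y) (hf : ContinuousOn f SS) :
    ∀ n : ℕ, ∃ δ > (0:ℝ), ∀ x ∈ f '' SS, ∀ y ∈ f '' SS, dist x y < δ →
      ∃ p : Path x y, (∀ t, p t ∈ f '' SS) ∧ ∀ t u, dist (p t) (p u) ≤ (1/2 : ℝ)^n := by
  intro n
  by_contra hcon
  push_neg at hcon
  set ε : ℝ := (1/2:ℝ)^n with hε
  have hεpos : 0 < ε := by positivity
  -- extract bad sequences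
  have hbad : ∀ k : ℕ, ∃ x ∈ f '' SS, ∃ y ∈ f '' SS, dist x y < 1/(k+1 : ℝ) ∧
      ∀ p : Path x y, (∀ t, p t ∈ f '' SS) → ∃ t u, ε < dist (p t) (p u) := by
    intro k
    obtain ⟨x, hx, y, hy, hxy, hp⟩ := hcon (1/(k+1:ℝ)) (by positivity)
    refine ⟨x, hx, y, hy, hxy, fun p hmem => ?_⟩
    obtain ⟨t, u, htu⟩ := hp p hmem
    exact ⟨t, u, htu⟩
  choose x hx y hy hxy hbadp using hbad
  choose a ha hfa using hx
  choose b hb hfb using hy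
  -- subsequences
  obtain ⟨α, hα, φ1, hφ1, hconva⟩ := (isCompact_sphere (0:ℝ×ℝ) 1).tendsto_subseq ha
  obtain ⟨β, hβ, φ2, hφ2, hconvb⟩ := (isCompact_sphere (0:ℝ×ℝ) 1).tendsto_subseq
    (fun j => hb (φ1 j))
  set kk : ℕ → ℕ := fun j => φ1 (φ2 j) with hkk
  have hkmono : StrictMono kk := hφ1.comp hφ2
  set A : ℕ → ℝ × ℝ := fun j => a (kk j) with hA
  set B : ℕ → ℝ × ℝ := fun j => b (kk j) with hB
  have hconvA : Filter.Tendsto A Filter.atTop (nhds α) := by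
    have := hconva.comp hφ2.tendsto_atTop
    exact this
  have hconvB : Filter.Tendsto B Filter.atTop (nhds β) := hconvb
  -- convergence of images
  have hfconvA : Filter.Tendsto (fun j => f (A j)) Filter.atTop (nhds (f α)) := by
    have h1 : Filter.Tendsto A Filter.atTop (nhdsWithin α SS) := by
      rw [tendsto_nhdsWithin_iff]
      exact ⟨hconvA, Filter.Eventually.of_forall (fun j => ha (kk j))⟩
    exact ((hf α hα).tendsto).comp h1
  have hfconvB : Filter.Tendsto (fun j => f (B j)) Filter.atTop (nhds (f β)) := by
    have h1 : Filter.Tendsto B Filter.atTop (nhdsWithin β SS) := by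
      rw [tendsto_nhdsWithin_iff]
      exact ⟨hconvB, Filter.Eventually.of_forall (fun j => hb (kk j))⟩
    exact ((hf β hβ).tendsto).comp h1
  -- f α = f β
  have hfαβ : f α = f β := by
    have hdist : Filter.Tendsto (fun j => dist (f (A j)) (f (B j))) Filter.atTop
        (nhds (dist (f α) (f β))) := hfconvA.dist hfconvB
    have hsq : Filter.Tendsto (fun j => dist (f (A j)) (f (B j))) Filter.atTop (nhds 0) := by
      apply squeeze_zero (fun j => dist_nonneg)
        (fun j => ?_) tendsto_one_div_add_atTop_nhds_zero_nat
      have h1 : dist (f (A j)) (f (B j)) < 1/(kk j + 1 : ℝ) := by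
        have h0 := hxy (kk j)
        simp only [hA, hB]
        rw [hfa (kk j), hfb (kk j)]
        exact h0
      have h2 : (1:ℝ)/(kk j + 1) ≤ 1/(j+1) := by
        apply one_div_le_one_div_of_le (by positivity)
        have hjk : (j:ℝ) ≤ kk j := by exact_mod_cast hkmono.le_apply
        linarith
      linarith
    have := tendsto_nhds_unique hdist hsq
    exact dist_eq_zero.1 this
  -- uniform continuity of f on the sphere
  have hfu : ∀ ε' > (0:ℝ), ∃ τ > (0:ℝ), ∀ p ∈ SS, ∀ q ∈ SS, dist p q < τ →
      dist (f p) (f q) < ε' := by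
    intro ε' hε'
    have := (isCompact_sphere (0:ℝ×ℝ) 1).uniformContinuousOn_of_continuous hf
    rw [Metric.uniformContinuousOn_iff] at this
    obtain ⟨τ, hτ, hτp⟩ := this ε' hε'
    exact ⟨τ, hτ, fun p hp q hq hpq => hτp p hp q hq hpq⟩
  obtain ⟨τ, hτpos, hτ⟩ := hfu (ε/4) (by positivity)
  obtain ⟨η, hηpos, hη⟩ := smallPathsS (τ/2) (by positivity)
  -- pick large j
  have hAev : ∀ᶠ j in Filter.atTop, dist (A j) α < η := by
    have := Metric.tendsto_nhds.1 hconvA η hηpos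
    exact this
  have hBev : ∀ᶠ j in Filter.atTop, dist (B j) β < η := by
    exact Metric.tendsto_nhds.1 hconvB η hηpos
  obtain ⟨j, hj1, hj2⟩ := (hAev.and hBev).exists
  -- small paths in the sphere
  obtain ⟨σ1, hσ1c, hσ1m, hσ1s, hσ1t, hσ1d⟩ := hη (A j) (ha (kk j)) α hα hj1
  obtain ⟨σ2, hσ2c, hσ2m, hσ2s, hσ2t, hσ2d⟩ := hη β hβ (B j) (hb (kk j)) (by rwa [dist_comm])
  -- build the path from x (kk j) to y (kk j)
  have hc1 : Continuous fun t : ℝ => f (σ1 (2*t)) :=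
    hf.comp_continuous (hσ1c.comp (continuous_const.mul continuous_id)) (fun t => hσ1m _)
  have hc2 : Continuous fun t : ℝ => f (σ2 (2*t - 1)) :=
    hf.comp_continuous (hσ2c.comp ((continuous_const.mul continuous_id).sub continuous_const)) (fun t => hσ2m _)
  set pf : ℝ → Y := fun t => if t ≤ 1/2 then f (σ1 (2*t)) else f (σ2 (2*t - 1)) with hpf
  have hpfc : Continuous pf := by
    apply Continuous.if_le hc1 hc2 continuous_id continuous_const
    intro t ht
    have ht' : t = 1/2 := ht
    rw [ht']
    norm_num
    rw [hσ1t 1 (le_refl 1), hσ2s 0 (le_refl 0), hfαβ]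
  set p : Path (x (kk j)) (y (kk j)) :=
    { toFun := fun t => pf t
      continuous_toFun := hpfc.comp continuous_subtype_val
      source' := by
        simp only [hpf]
        norm_num
        rw [hσ1s 0 (le_refl 0), hfa (kk j)]
      target' := by
        simp only [hpf]
        norm_num
        rw [hσ2t 1 (le_refl 1), hfb (kk j)] } with hp
  have hpmem : ∀ t, p t ∈ f '' SS := by
    intro t
    simp only [hp, hpf, Path.coe_mk_mk]
    split
    · exact mem_image_of_mem f (hσ1m _)
    · exact mem_image_of_mem f (hσ2m _)
  obtain ⟨t, u, htu⟩ := hbadp (kk j) p hpmem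
  -- but all pairs of values of p are within ε/2 < ε
  have hbound : ∀ t u : ↥unitInterval, dist (p t) (p u) ≤ ε/2 := by
    have hval : ∀ t : ↥unitInterval, dist (p t) (f α) ≤ ε/4 := by
      intro t
      simp only [hp, hpf, Path.coe_mk_mk]
      split
      · -- on σ1: dist (f (σ1 _), f (σ1 1) = f α)
        have := hτ (σ1 (2*(t:ℝ))) (hσ1m _) (σ1 1) (hσ1m 1) ((hσ1d _ _).trans_lt (by linarith))
        rw [hσ1t 1 (le_refl 1)] at this
        exact this.le
      · have := hτ (σ2 (2*(t:ℝ) - 1)) (hσ2m _) (σ2 0) (hσ2m 0) ((hσ2d _ _).trans_lt (by linarith))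
        rw [hσ2s 0 (le_refl 0), ← hfαβ] at this
        exact this.le
    intro t u
    calc dist (p t) (p u) ≤ dist (p t) (f α) + dist (f α) (p u) := dist_triangle _ _ _
      _ ≤ ε/4 + ε/4 := by
          have := hval u
          rw [dist_comm (f α) (p u)]
          linarith [hval t]
      _ = ε/2 := by ring
  have := hbound t u
  linarith

theorem exists_retract (hdim : CoveringDimLE Y 1) (K : Set Y) (hK : IsCompact K)
    (hne : K.Nonempty)
    (hglob : ∀ x ∈ K, ∀ y ∈ K, JoinedIn K x y)
    (hP : ∀ n : ℕ, ∃ δ > 0, ∀ x ∈ K, ∀ y ∈ K, dist x y < δ →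
      ∃ p : Path x y, (∀ t, p t ∈ K) ∧ ∀ t u, dist (p t) (p u) ≤ (1/2 : ℝ)^n) :
    ∃ r : Y → Y, Continuous r ∧ (∀ y, r y ∈ K) ∧ ∀ y ∈ K, r y = y := by
  classical
  obtain ⟨Ucov, a, hUo, hUKc, haK, haDist, hUlf⟩ := exists_whitney K hK hne
  obtain ⟨V, hVo, hVsub, hVcov, hVord⟩ := exists_final_cover hdim Ucov hUo (shells K)
    (shells_closed K) (fun m => by rw [hUKc]; exact shells_subset_compl K hK hne m)
    (fun x hx => shells_cover K hK hne (by rw [hUKc] at hx; exact hx))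
    (fun x hx => shells_locfin K hK hne (by rw [hUKc] at hx; exact hx))
  have hVKc : ∀ s, V s ⊆ Kᶜ := fun s =>
    (hVsub s).trans (by rw [← hUKc]; exact subset_iUnion _ s)
  obtain ⟨δ, hδpos, hpath⟩ := exists_path_family K hglob hP
  -- the path family between anchors
  have hγex : ∀ s t : ℕ, ∃ p : ℝ → Y, Continuous p ∧ (∀ u, p u ∈ K) ∧
      (∀ u, u ≤ 0 → p u = a s) ∧ (∀ u, 1 ≤ u → p u = a t) ∧
      (s = t → ∀ u, p u = a s) ∧
      (∀ n, dist (a s) (a t) < δ n → ∀ u v, dist (p u) (p v) ≤ (1/2:ℝ)^n) := by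
    intro s t
    by_cases hst : s = t
    · subst hst
      exact ⟨fun _ => a s, continuous_const, fun _ => haK s, fun _ _ => rfl, fun _ _ => rfl,
        fun _ _ => rfl, fun n _ u v => by simpa using by positivity⟩
    · obtain ⟨p, h1, h2, h3, h4, h5⟩ := hpath (a s) (haK s) (a t) (haK t)
      exact ⟨p, h1, h2, h3, h4, fun h => absurd h hst, h5⟩
  choose γ hγc hγK hγ0 hγ1 hγdiag hγd using hγex
  -- weight functions
  set lam : ℕ → Y → ℝ := fun s x => infDist x (V s)ᶜ with hlam
  have hlamc : ∀ s, Continuous (lam s) := fun s => continuous_infDist_pt _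
  have hlam_pos : ∀ s x, x ∈ V s → 0 < lam s x := by
    intro s x hx
    have hcc : IsClosed ((V s)ᶜ) := (hVo s).isClosed_compl
    have hccn : ((V s)ᶜ).Nonempty := ⟨hne.choose, fun hmem => (hVKc s hmem) hne.choose_spec⟩
    exact (hcc.notMem_iff_infDist_pos hccn).1 (by simpa using hx)
  have hlam_zero : ∀ s x, x ∉ V s → lam s x = 0 :=
    fun s x hx => infDist_zero_of_mem (by simpa using hx)
  have hlam_nonneg : ∀ s x, 0 ≤ lam s x := fun s x => infDist_nonneg
  set Sx : Y → Set ℕ := fun x => {s | x ∈ V s} with hSx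
  set s0 : Y → ℕ := fun x => sInf (Sx x) with hs0
  set t0 : Y → ℕ := fun x => sSup (Sx x) with ht0
  set w : Y → ℝ := fun x => lam (t0 x) x / (lam (s0 x) x + lam (t0 x) x) with hw
  set r : Y → Y := fun x => if x ∈ K then x else γ (s0 x) (t0 x) (w x) with hr
  -- membership of supports
  have hSne : ∀ x, x ∉ K → (Sx x).Nonempty := by
    intro x hx
    have : x ∈ ⋃ s, V s := hVcov (by rw [hUKc]; exact hx)
    obtain ⟨s, hs⟩ := mem_iUnion.1 this
    exact ⟨s, hs⟩
  have hSfin : ∀ x, x ∉ K → (Sx x).Finite := by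
    intro x hx
    exact (hVord x (by rw [hUKc]; exact hx)).1
  have hScard : ∀ x, x ∉ K → (Sx x).ncard ≤ 2 := by
    intro x hx
    exact (hVord x (by rw [hUKc]; exact hx)).2
  have hs0mem : ∀ x, x ∉ K → s0 x ∈ Sx x := fun x hx => Nat.sInf_mem (hSne x hx)
  have ht0mem : ∀ x, x ∉ K → t0 x ∈ Sx x :=
    fun x hx => Nat.sSup_mem (hSne x hx) (hSfin x hx).bddAbove
  have hbetween : ∀ x, x ∉ K → ∀ u ∈ Sx x, s0 x ≤ u ∧ u ≤ t0 x := by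
    intro x hx u hu
    exact ⟨Nat.sInf_le hu, le_csSup (hSfin x hx).bddAbove hu⟩
  have hSeq : ∀ x, x ∉ K → Sx x = {s0 x, t0 x} := by
    intro x hx
    apply subset_antisymm
    · intro u hu
      obtain ⟨h1, h2⟩ := hbetween x hx u hu
      rcases eq_or_ne u (s0 x) with rfl | hus
      · exact mem_insert _ _
      rcases eq_or_ne u (t0 x) with rfl | hut
      · exact mem_insert_of_mem _ rfl
      · exfalso
        have hst : s0 x ≠ t0 x := by
          intro heq
          rw [heq] at h1
          exact hut (le_antisymm h2 h1)
        have hsub3 : {s0 x, t0 x, u} ⊆ Sx x := by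
          intro v hv
          rcases hv with rfl | rfl | rfl
          · exact hs0mem x hx
          · exact ht0mem x hx
          · exact hu
        have h3 : ({s0 x, t0 x, u} : Set ℕ).ncard = 3 := by
          rw [Set.ncard_insert_of_notMem (by simp [hst, (Ne.symm hus)]),
            Set.ncard_insert_of_notMem (by simp [Ne.symm hut]), Set.ncard_singleton]
        have h4 : ({s0 x, t0 x, u} : Set ℕ).ncard ≤ (Sx x).ncard :=
          Set.ncard_le_ncard hsub3 (hSfin x hx)
        have := hScard x hx
        omega
    · intro u hu
      rcases hu with rfl | hu
      · exact hs0mem x hx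
      · rw [mem_singleton_iff] at hu
        rw [hu]
        exact ht0mem x hx
  -- helper: sInf and sSup of a sorted pair
  have hpairInf : ∀ p q : ℕ, p ≤ q → sInf ({p, q} : Set ℕ) = p := by
    intro p q hpq
    apply le_antisymm (Nat.sInf_le (mem_insert _ _))
    apply le_csInf ⟨p, mem_insert _ _⟩
    rintro b hb
    rcases hb with rfl | hb
    · exact le_refl _
    · rw [mem_singleton_iff] at hb; omega
  have hpairSup : ∀ p q : ℕ, p ≤ q → sSup ({p, q} : Set ℕ) = q := by
    intro p q hpq
    apply le_antisymm
    · apply csSup_le ⟨p, mem_insert _ _⟩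
      rintro b hb
      rcases hb with rfl | hb
      · exact hpq
      · rw [mem_singleton_iff] at hb; omega
    · exact le_csSup (((Set.finite_singleton q).insert p).bddAbove) (show q ∈ ({p, q} : Set ℕ) from mem_insert_of_mem _ rfl)
  -- r maps into K and restricts to the identity on K
  have hrK : ∀ x, r x ∈ K := by
    intro x
    simp only [hr]
    split
    · assumption
    · exact hγK _ _ _
  have hrid : ∀ x ∈ K, r x = x := by
    intro x hx
    simp only [hr, if_pos hx]
  -- continuity
  have hcont : Continuous r := by
    rw [continuous_iff_continuousAt]
    intro x
    by_cases hxK : x ∈ K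
    · -- continuity at points of K
      have hrx : r x = x := hrid x hxK
      rw [ContinuousAt, hrx, Metric.tendsto_nhds]
      intro ε hε
      obtain ⟨n, hn⟩ : ∃ n : ℕ, (1/2:ℝ)^n < ε/4 :=
        exists_pow_lt_of_lt_one (by linarith) (by norm_num)
      set δ' := min (δ n / 8) (ε/8) with hδ'
      have hδ'pos : 0 < δ' := lt_min (by linarith [hδpos n]) (by linarith)
      filter_upwards [Metric.ball_mem_nhds x hδ'pos] with y hy
      rw [mem_ball] at hy
      by_cases hyK : y ∈ K
      · rw [hrid y hyK]
        calc dist y x < δ' := hy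
          _ ≤ ε/8 := min_le_right _ _
          _ < ε := by linarith
      · have hyc : r y = γ (s0 y) (t0 y) (w y) := by simp only [hr, if_neg hyK]
        have hd : infDist y K ≤ dist y x := infDist_le_dist_of_mem hxK
        have hs0' := hs0mem y hyK
        have ht0' := ht0mem y hyK
        have hdas : dist y (a (s0 y)) ≤ 2 * infDist y K := haDist _ y (hVsub _ hs0')
        have hdat : dist y (a (t0 y)) ≤ 2 * infDist y K := haDist _ y (hVsub _ ht0')
        have hδ'1 : δ' ≤ δ n / 8 := min_le_left _ _
        have hδ'2 : δ' ≤ ε/8 := min_le_right _ _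
        have hdast : dist (a (s0 y)) (a (t0 y)) < δ n := by
          calc dist (a (s0 y)) (a (t0 y)) ≤ dist (a (s0 y)) y + dist y (a (t0 y)) :=
                dist_triangle _ _ _
            _ = dist y (a (s0 y)) + dist y (a (t0 y)) := by rw [dist_comm (a (s0 y)) y]
            _ ≤ 4 * infDist y K := by linarith
            _ ≤ 4 * dist y x := by linarith
            _ < 4 * δ' := by linarith
            _ ≤ δ n / 2 := by linarith
            _ < δ n := by linarith [hδpos n]
        have hb := hγd (s0 y) (t0 y) n hdast (w y) 0
        rw [hγ0 (s0 y) (t0 y) 0 (le_refl 0)] at hb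
        calc dist (r y) x ≤ dist (r y) (a (s0 y)) + dist (a (s0 y)) y + dist y x :=
              dist_triangle4 _ _ _ _
          _ ≤ (1/2:ℝ)^n + dist (a (s0 y)) y + dist y x := by
              rw [hyc]; linarith [hb]
          _ = (1/2:ℝ)^n + dist y (a (s0 y)) + dist y x := by rw [dist_comm (a (s0 y)) y]
          _ ≤ (1/2:ℝ)^n + 2 * infDist y K + dist y x := by linarith
          _ ≤ (1/2:ℝ)^n + 3 * dist y x := by linarith
          _ < ε/4 + 3 * δ' := by linarith
          _ ≤ ε/4 + 3 * (ε/8) := by linarith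
          _ < ε := by linarith
    · -- continuity in the complement
      have hxs0 := hs0mem x hxK
      have hxt0 := ht0mem x hxK
      rcases lt_or_eq_of_le (hbetween x hxK (s0 x) hxs0).2 with hlt | heqdiag
      · -- two sets at x
        set ss := s0 x with hss
        set tt := t0 x with htt
        set N' := V ss ∩ V tt with hN'
        have hN'open : IsOpen N' := (hVo ss).inter (hVo tt)
        have hxN' : x ∈ N' := ⟨hxs0, hxt0⟩
        have hSy : ∀ y ∈ N', Sx y = {ss, tt} := by
          intro y hy
          have hyK : y ∉ K := fun h => (hVKc ss hy.1) h
          symm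
          apply Set.eq_of_subset_of_ncard_le
          · intro u hu
            rcases hu with rfl | hu
            · exact hy.1
            · rw [mem_singleton_iff] at hu; rw [hu]; exact hy.2
          · rw [Set.ncard_pair hlt.ne]
            exact hScard y hyK
          · exact hSfin y hyK
        have hs0y : ∀ y ∈ N', s0 y = ss := by
          intro y hy
          have : Sx y = {ss, tt} := hSy y hy
          simp only [hs0]
          rw [this]
          exact hpairInf ss tt hlt.le
        have ht0y : ∀ y ∈ N', t0 y = tt := by
          intro y hy
          have : Sx y = {ss, tt} := hSy y hy
          simp only [ht0]
          rw [this]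
          exact hpairSup ss tt hlt.le
        have hcO : ContinuousOn (fun y => γ ss tt (lam tt y / (lam ss y + lam tt y))) N' := by
          apply (hγc ss tt).comp_continuousOn
          apply ContinuousOn.div (hlamc tt).continuousOn
            ((hlamc ss).add (hlamc tt)).continuousOn
          intro y hy
          have h1 : 0 < lam ss y := hlam_pos ss y hy.1
          have h2 : 0 ≤ lam tt y := hlam_nonneg tt y
          rw [Pi.add_apply]
          exact ne_of_gt (by linarith)
        have hcongr : ∀ y ∈ N', r y = γ ss tt (lam tt y / (lam ss y + lam tt y)) := by
          intro y hy
          have hyK : y ∉ K := fun h => (hVKc ss hy.1) h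
          simp only [hr, if_neg hyK, hw]
          rw [hs0y y hy, ht0y y hy]
        exact (hcO.congr hcongr).continuousAt (hN'open.mem_nhds hxN')
      · -- a single set at x
        set ss := s0 x with hss
        have hrx : r x = a ss := by
          simp only [hr, if_neg hxK]
          rw [hγdiag (s0 x) (t0 x) heqdiag (w x)]
        have hSxx : Sx x = {ss} := by
          have := hSeq x hxK
          rw [← heqdiag] at this
          simpa [hss] using this
        rw [ContinuousAt, hrx, Metric.tendsto_nhds]
        intro ε hε
        obtain ⟨ε₀, hε₀, hT⟩ := hUlf x hxK
        -- modulus for each possible partner index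
        have hddex : ∀ u : ℕ, ∃ d > (0:ℝ),
            (∀ z : ℝ, |z| < d → dist (γ ss u z) (a ss) < ε) ∧
            (∀ z : ℝ, |z - 1| < d → dist (γ u ss z) (a ss) < ε) := by
          intro u
          have c1 : ContinuousAt (γ ss u) 0 := (hγc ss u).continuousAt
          have c2 : ContinuousAt (γ u ss) 1 := (hγc u ss).continuousAt
          rw [Metric.continuousAt_iff] at c1 c2
          obtain ⟨d1, hd1, hc1⟩ := c1 ε hε
          obtain ⟨d2, hd2, hc2⟩ := c2 ε hε
          refine ⟨min d1 d2, lt_min hd1 hd2, ?_, ?_⟩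
          · intro z hz
            have := hc1 (show dist z 0 < d1 by rw [Real.dist_eq, sub_zero]; exact hz.trans_le (min_le_left _ _))
            rwa [hγ0 ss u 0 (le_refl 0)] at this
          · intro z hz
            have := hc2 (show dist z 1 < d2 by rw [Real.dist_eq]; exact hz.trans_le (min_le_right _ _))
            rwa [hγ1 u ss 1 (le_refl 1)] at this
        choose dd hddpos hdd1 hdd2 using hddex
        set c := lam ss x / 2 with hc
        have hcpos : 0 < c := by
          have := hlam_pos ss x hxs0
          simp only [hc]; linarith
        -- the eventually facts
        have Ev1 : ∀ᶠ y in nhds x, y ∈ V ss := (hVo ss).mem_nhds hxs0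
        have Ev2 : ∀ᶠ y in nhds x, dist y x < ε₀ := by
          filter_upwards [Metric.ball_mem_nhds x hε₀] with y hy using mem_ball.1 hy
        have Ev3 : ∀ᶠ y in nhds x, c < lam ss y := by
          have hopen : IsOpen {y | c < lam ss y} := isOpen_lt continuous_const (hlamc ss)
          have hmem : x ∈ {y | c < lam ss y} := by
            simp only [mem_setOf_eq, hc]
            linarith [hlam_pos ss x hxs0]
          exact hopen.mem_nhds hmem
        have Ev4 : ∀ᶠ y in nhds x, ∀ u ∈ hT.toFinset, u ≠ ss → lam u y < c * dd u := by
          rw [Filter.eventually_all_finset]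
          intro u hu
          by_cases hus : u = ss
          · filter_upwards with y hy
            exact absurd hus hy
          · have hopen : IsOpen {y | lam u y < c * dd u} :=
              isOpen_lt (hlamc u) continuous_const
            have hxu : x ∉ V u := by
              intro hmem
              have : u ∈ Sx x := hmem
              rw [hSxx] at this
              exact hus (by simpa using this)
            have hmem : x ∈ {y | lam u y < c * dd u} := by
              simp only [mem_setOf_eq]
              rw [hlam_zero u x hxu]
              exact mul_pos hcpos (hddpos u)
            filter_upwards [hopen.mem_nhds hmem] with y hy _ using hy
        filter_upwards [Ev1, Ev2, Ev3, Ev4] with y hy1 hy2 hy3 hy4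
        have hyK : y ∉ K := fun h => (hVKc ss hy1) h
        have hsin : ss ∈ Sx y := hy1
        have hSy := hSeq y hyK
        have hry : r y = γ (s0 y) (t0 y) (w y) := by simp only [hr, if_neg hyK]
        rcases eq_or_ne (s0 y) (t0 y) with heq2 | hne2
        · -- singleton support: the value is an anchor
          have hss0 : ss = s0 y := by
            have : ss ∈ ({s0 y, t0 y} : Set ℕ) := hSy ▸ hsin
            rcases this with h | h
            · exact h
            · rw [mem_singleton_iff] at h; rw [h, heq2]
          have : r y = a (s0 y) := by
            rw [hry, hγdiag (s0 y) (t0 y) heq2 (w y)]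
          rw [this, ← hss0]
          simpa using hε
        · -- pair support
          have hsy : ss ∈ ({s0 y, t0 y} : Set ℕ) := hSy ▸ hsin
          have hlt2 : s0 y < t0 y :=
            lt_of_le_of_ne (hbetween y hyK (t0 y) (ht0mem y hyK)).1 hne2
          rcases hsy with hseq | hseq
          · -- ss = s0 y, partner is t0 y
            set u := t0 y with hu
            have huS : u ∈ Sx y := ht0mem y hyK
            have huT : u ∈ hT.toFinset := by
              rw [Set.Finite.mem_toFinset]
              exact ⟨y, (hVsub u) huS, mem_ball.2 hy2⟩
            have hus : u ≠ ss := by rw [hseq]; exact hlt2.ne'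
            have hlamu : lam u y < c * dd u := hy4 u huT hus
            have hlams : c < lam ss y := hy3
            have hwy : w y = lam u y / (lam ss y + lam u y) := by
              simp only [hw]
              rw [← hseq, ← hu]
            have hwnn : 0 ≤ w y := by
              rw [hwy]
              have := hlam_nonneg u y
              have h2 : (0:ℝ) < lam ss y + lam u y := by linarith
              positivity
            have hwlt : w y < dd u := by
              rw [hwy, div_lt_iff₀ (by linarith [hlam_nonneg u y])]
              have h1 : c * dd u ≤ lam ss y * dd u :=
                mul_le_mul_of_nonneg_right (le_of_lt hlams) (le_of_lt (hddpos u))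
              have h2 : lam ss y * dd u ≤ (lam ss y + lam u y) * dd u := by
                have := hlam_nonneg u y
                nlinarith [hddpos u]
              linarith
            have hfin : dist (γ ss u (w y)) (a ss) < ε := hdd1 u (w y) (by rwa [abs_of_nonneg hwnn])
            rw [hry, ← hseq]
            exact hfin
          · -- ss = t0 y, partner is s0 y
            rw [mem_singleton_iff] at hseq
            set u := s0 y with hu
            have huS : u ∈ Sx y := hs0mem y hyK
            have huT : u ∈ hT.toFinset := by
              rw [Set.Finite.mem_toFinset]
              exact ⟨y, (hVsub u) huS, mem_ball.2 hy2⟩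
            have hus : u ≠ ss := by rw [hseq]; exact hlt2.ne
            have hlamu : lam u y < c * dd u := hy4 u huT hus
            have hlams : c < lam ss y := hy3
            have hwy : w y = lam ss y / (lam u y + lam ss y) := by
              simp only [hw]
              rw [← hseq, ← hu]
            have hwle : w y ≤ 1 := by
              rw [hwy]
              have h2 : (0:ℝ) < lam u y + lam ss y := by linarith [hlam_nonneg u y]
              rw [div_le_one h2]
              linarith [hlam_nonneg u y]
            have hwgt : 1 - dd u < w y := by
              rw [hwy]
              have h2 : (0:ℝ) < lam u y + lam ss y := by linarith [hlam_nonneg u y]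
              rw [lt_div_iff₀ h2]
              have h1 : c * dd u ≤ lam ss y * dd u :=
                mul_le_mul_of_nonneg_right (le_of_lt hlams) (le_of_lt (hddpos u))
              have h3 : lam ss y * dd u ≤ (lam u y + lam ss y) * dd u := by
                have := hlam_nonneg u y
                nlinarith [hddpos u]
              nlinarith [hddpos u, hlam_nonneg u y]
            have habs : |w y - 1| < dd u := by
              rw [abs_lt]
              constructor <;> nlinarith [hddpos u]
            have hfin : dist (γ u ss (w y)) (a ss) < ε := hdd2 u (w y) habs
            rw [hry, ← hseq]
            exact hfin
      
  exact ⟨r, hcont, hrK, hrid⟩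

end NullhExt
end

/-- A null-homotopic loop on the boundary circle of the disc, with values in a one-dimensional
Peano continuum, extends to the disc with image equal to the image of the loop; in particular
the extension has the same diameter. -/
theorem nullhomotopic_extends_with_same_image
    {Y : Type*} [MetricSpace Y] [CompactSpace Y] [ConnectedSpace Y]
    [LocallyConnectedSpace Y] (hdim : CoveringDimLE Y 1)
    (f : ℝ × ℝ → Y) (hf : ContinuousOn f (Metric.sphere (0 : ℝ × ℝ) 1))
    (hnull : ∃ g : ℝ × ℝ → Y, ContinuousOn g (Metric.closedBall (0 : ℝ × ℝ) 1) ∧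
      ∀ x ∈ Metric.sphere (0 : ℝ × ℝ) 1, g x = f x) :
    ∃ h : ℝ × ℝ → Y, ContinuousOn h (Metric.closedBall (0 : ℝ × ℝ) 1) ∧
      (∀ x ∈ Metric.sphere (0 : ℝ × ℝ) 1, h x = f x) ∧
      h '' Metric.closedBall (0 : ℝ × ℝ) 1 = f '' Metric.sphere (0 : ℝ × ℝ) 1 ∧
      Metric.diam (h '' Metric.closedBall (0 : ℝ × ℝ) 1) =
        Metric.diam (f '' Metric.sphere (0 : ℝ × ℝ) 1) := by
  classical
  obtain ⟨g, hg, hgf⟩ := hnull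
  set S := Metric.sphere (0 : ℝ × ℝ) 1 with hS
  set K := f '' S with hKdef
  have hSne : S.Nonempty := NormedSpace.sphere_nonempty.2 zero_le_one
  have hScomp : IsCompact S := isCompact_sphere _ _
  have hKcomp : IsCompact K := hScomp.image_of_continuousOn hf
  have hKne : K.Nonempty := hSne.image f
  have hrank : 1 < Module.rank ℝ (ℝ × ℝ) := by
    rw [rank_prod, Module.rank_self]
    norm_num
  have hSpc : IsPathConnected S := isPathConnected_sphere hrank 0 zero_le_one
  have hKpc : IsPathConnected K := hSpc.image' hf
  have hglob : ∀ x ∈ K, ∀ y ∈ K, JoinedIn K x y := fun x hx y hy => hKpc.joinedIn x hx y hy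
  obtain ⟨r, hrc, hrK, hrid⟩ := NullhExt.exists_retract hdim K hKcomp hKne hglob
    (NullhExt.K_ulpc f hf)
  have himg : (r ∘ g) '' Metric.closedBall (0 : ℝ × ℝ) 1 = f '' S := by
    apply subset_antisymm
    · rintro y ⟨x, hx, rfl⟩
      exact hrK (g x)
    · rintro y ⟨x, hxS, rfl⟩
      refine ⟨x, sphere_subset_closedBall hxS, ?_⟩
      simp only [Function.comp_apply, hgf x hxS]
      exact hrid (f x) (mem_image_of_mem f hxS)
  refine ⟨r ∘ g, hrc.comp_continuousOn hg, ?_, himg, by rw [himg]⟩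
  · intro x hx
    have h1 : (r ∘ g) x = r (f x) := by simp only [Function.comp_apply, hgf x hx]
    rw [h1]
    exact hrid (f x) (mem_image_of_mem f hx)
end

section
/- Let α : I → ℝ² be a continuous path and U ⊆ ℝ² open with α(0), α(1) ∉ U. Then α⁻¹(U) is a countable disjoint union of open intervals (a_n, b_n) with α(a_n), α(b_n) ∈ ∂U, and the path α' obtained by replacing α on each [a_n, b_n] with the constant-speed line segment from α(a_n) to α(b_n) is continuous, provided the diameters of the sets α([a_n,b_n]) ∪ [α(a_n), α(b_n)] form a null sequence (which holds automatically by uniform continuity of α). -/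
open Set

lemma open_decomp (S : Set ℝ) (hS : IsOpen S)
    (hsub : S ⊆ Set.Icc 0 1) (h0 : (0:ℝ) ∉ S) (h1 : (1:ℝ) ∉ S) :
    ∃ a b : ℕ → ℝ, (∀ n, a n ≤ b n) ∧ (∀ n, Set.Icc (a n) (b n) ⊆ Set.Icc (0:ℝ) 1) ∧
      (Pairwise fun m n => Disjoint (Set.Ioo (a m) (b m)) (Set.Ioo (a n) (b n))) ∧
      (S = ⋃ n, Set.Ioo (a n) (b n)) ∧ (∀ n, a n < b n → a n ∉ S ∧ b n ∉ S) := by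
  classical
  rcases eq_empty_or_nonempty S with rfl | hne
  · refine ⟨fun _ => 0, fun _ => 0, fun n => le_refl _, fun n => ?_, ?_, by simp, by simp⟩
    · intro t ht; simp only [Set.Icc_self, mem_singleton_iff] at ht; simp [ht]
    · intro m n _; simp
  -- endpoints functions
  set A : ℝ → ℝ := fun t => sSup {s | s ≤ t ∧ s ∉ S} with hA
  set B : ℝ → ℝ := fun t => sInf {s | t ≤ s ∧ s ∉ S} with hB
  have hmemL : ∀ t ∈ S, (0:ℝ) ∈ {s | s ≤ t ∧ s ∉ S} := fun t ht => ⟨(hsub ht).1, h0⟩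
  have hmemR : ∀ t ∈ S, (1:ℝ) ∈ {s | t ≤ s ∧ s ∉ S} := fun t ht => ⟨(hsub ht).2, h1⟩
  have hbddL : ∀ t : ℝ, BddAbove {s | s ≤ t ∧ s ∉ S} :=
    fun t => ⟨t, fun s hs => hs.1⟩
  have hbddR : ∀ t : ℝ, BddBelow {s | t ≤ s ∧ s ∉ S} :=
    fun t => ⟨t, fun s hs => hs.1⟩
  have hA0 : ∀ t ∈ S, 0 ≤ A t := fun t ht => le_csSup (hbddL t) (hmemL t ht)
  have hB1 : ∀ t ∈ S, B t ≤ 1 := fun t ht => csInf_le (hbddR t) (hmemR t ht)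
  have hAlt : ∀ t ∈ S, A t < t := by
    intro t ht
    rcases Metric.isOpen_iff.1 hS t ht with ⟨ε, hε, hball⟩
    have : A t ≤ t - ε := by
      apply csSup_le ⟨0, hmemL t ht⟩
      intro s hs
      by_contra hlt
      push_neg at hlt
      exact hs.2 (hball (by rw [Metric.mem_ball, Real.dist_eq, abs_lt]; constructor <;> linarith [hs.1]))
    linarith
  have hBgt : ∀ t ∈ S, t < B t := by
    intro t ht
    rcases Metric.isOpen_iff.1 hS t ht with ⟨ε, hε, hball⟩
    have : t + ε ≤ B t := by
      apply le_csInf ⟨1, hmemR t ht⟩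
      intro s hs
      by_contra hlt
      push_neg at hlt
      exact hs.2 (hball (by rw [Metric.mem_ball, Real.dist_eq, abs_lt]; constructor <;> linarith [hs.1]))
    linarith
  have hAnot : ∀ t ∈ S, A t ∉ S := by
    intro t ht hmem
    rcases Metric.isOpen_iff.1 hS _ hmem with ⟨ε, hε, hball⟩
    rcases exists_lt_of_lt_csSup ⟨0, hmemL t ht⟩ (show A t - ε < A t by linarith) with ⟨s, hs, hlt⟩
    have hle : s ≤ A t := le_csSup (hbddL t) hs
    exact hs.2 (hball (by rw [Metric.mem_ball, Real.dist_eq, abs_lt]; constructor <;> linarith))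
  have hBnot : ∀ t ∈ S, B t ∉ S := by
    intro t ht hmem
    rcases Metric.isOpen_iff.1 hS _ hmem with ⟨ε, hε, hball⟩
    rcases exists_lt_of_csInf_lt ⟨1, hmemR t ht⟩ (show B t < B t + ε by linarith) with ⟨s, hs, hlt⟩
    have hle : B t ≤ s := csInf_le (hbddR t) hs
    exact hs.2 (hball (by rw [Metric.mem_ball, Real.dist_eq, abs_lt]; constructor <;> linarith))
  have hIooS : ∀ t ∈ S, Ioo (A t) (B t) ⊆ S := by
    intro t ht s hs
    by_contra hsn
    rcases le_total s t with hle | hle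
    · exact absurd (le_csSup (hbddL t) ⟨hle, hsn⟩) (not_le.2 hs.1)
    · exact absurd (csInf_le (hbddR t) ⟨hle, hsn⟩) (not_le.2 hs.2)
  have hkey : ∀ t ∈ S, ∀ t' ∈ S, t' ∈ Ioo (A t) (B t) → A t' = A t ∧ B t' = B t := by
    intro t ht t' ht' hmem
    constructor
    · apply le_antisymm
      · by_contra hlt
        push_neg at hlt
        exact hAnot t' ht' (hIooS t ht ⟨hlt, lt_trans (hAlt t' ht') hmem.2⟩)
      · exact le_csSup (hbddL t') ⟨le_of_lt hmem.1, hAnot t ht⟩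
    · apply le_antisymm
      · exact csInf_le (hbddR t') ⟨le_of_lt hmem.2, hBnot t ht⟩
      · by_contra hlt
        push_neg at hlt
        exact hBnot t' ht' (hIooS t ht ⟨lt_trans hmem.1 (hBgt t' ht'), hlt⟩)
  -- the set of component endpoint pairs
  set P : Set (ℝ × ℝ) := {p | ∃ t ∈ S, p = (A t, B t)} with hPdef
  have hPlt : ∀ p ∈ P, p.1 < p.2 := by
    rintro p ⟨t, ht, rfl⟩
    exact lt_trans (hAlt t ht) (hBgt t ht)
  have hPdisj : ∀ p ∈ P, ∀ q ∈ P, p ≠ q → Disjoint (Ioo p.1 p.2) (Ioo q.1 q.2) := by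
    rintro p ⟨t, ht, rfl⟩ q ⟨t', ht', rfl⟩ hne
    rw [Set.disjoint_left]
    intro s hsp hsq
    have hsS : s ∈ S := hIooS t ht hsp
    obtain ⟨e1, e2⟩ := hkey t ht s hsS hsp
    obtain ⟨e3, e4⟩ := hkey t' ht' s hsS hsq
    exact hne (by simp only [Prod.mk.injEq]; constructor <;> [rw [← e1, e3]; rw [← e2, e4]])
  have hPcnt : P.Countable := by
    have hq : ∀ p : ℝ × ℝ, ∃ q : ℚ, p ∈ P → (q : ℝ) ∈ Ioo p.1 p.2 := by
      intro p
      by_cases hp : p ∈ P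
      · rcases exists_rat_btwn (hPlt p hp) with ⟨q, hq1, hq2⟩
        exact ⟨q, fun _ => ⟨hq1, hq2⟩⟩
      · exact ⟨0, fun h => absurd h hp⟩
    choose g hg using hq
    rw [Set.countable_iff_exists_injOn]
    refine ⟨fun p => Encodable.encode (g p), ?_⟩
    intro p hp q hq heq
    have hgeq : g p = g q := Encodable.encode_injective heq
    have h1 : (g p : ℝ) ∈ Ioo p.1 p.2 := hg p hp
    have h2 : (g p : ℝ) ∈ Ioo q.1 q.2 := hgeq ▸ hg q hq
    by_contra hne
    exact Set.disjoint_left.1 (hPdisj p hp q hq hne) h1 h2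
  have hPne : P.Nonempty := by
    rcases hne with ⟨t, ht⟩
    exact ⟨(A t, B t), t, ht, rfl⟩
  rcases Set.Countable.exists_eq_range hPcnt hPne with ⟨f, hfP⟩
  have hfmem : ∀ n, f n ∈ P := fun n => hfP ▸ Set.mem_range_self n
  set ab : ℕ → ℝ × ℝ := fun n => if ∃ m < n, f m = f n then (0, 0) else f n with habdef
  have hab : ∀ n, (ab n = (0,0)) ∨ (ab n = f n ∧ ¬∃ m < n, f m = f n) := by
    intro n
    by_cases h : ∃ m < n, f m = f n
    · left; simp only [habdef, if_pos h]
    · right; exact ⟨by simp only [habdef, if_neg h], h⟩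
  refine ⟨fun n => (ab n).1, fun n => (ab n).2, ?_, ?_, ?_, ?_, ?_⟩ <;> dsimp only
  · intro n
    rcases hab n with h | ⟨h, _⟩
    · rw [h]
    · rw [h]; exact le_of_lt (hPlt _ (hfmem n))
  · intro n
    rcases hab n with h | ⟨h, _⟩
    · rw [h]; intro x hx
      simp only [Set.Icc_self, mem_singleton_iff] at hx
      simp [hx]
    · rw [h]
      obtain ⟨t, ht, hft⟩ := hfmem n
      rw [hft]
      dsimp only
      exact Set.Icc_subset_Icc (hA0 t ht) (hB1 t ht)
  · intro m n hmn
    rcases hab m with hm | ⟨hm, hm'⟩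
    · rw [hm]; simp
    rcases hab n with hn | ⟨hn, hn'⟩
    · rw [hn]; simp
    rw [hm, hn]
    by_cases hfe : f m = f n
    · exfalso
      rcases lt_or_gt_of_ne hmn with h | h
      · exact hn' ⟨m, h, hfe⟩
      · exact hm' ⟨n, h, hfe.symm⟩
    · exact hPdisj _ (hfmem m) _ (hfmem n) hfe
  · ext t
    simp only [Set.mem_iUnion]
    constructor
    · intro ht
      have hmem : (A t, B t) ∈ P := ⟨t, ht, rfl⟩
      rw [hfP] at hmem
      obtain ⟨m, hm⟩ := hmem
      have hex : ∃ k, f k = (A t, B t) := ⟨m, hm⟩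
      set n := Nat.find hex with hn
      have hfn : f n = (A t, B t) := Nat.find_spec hex
      have habn : ab n = f n := by
        rcases hab n with h | ⟨h, _⟩
        · exfalso
          simp only [habdef] at h
          by_cases hc : ∃ m < n, f m = f n
          · obtain ⟨k, hk, hfk⟩ := hc
            exact Nat.find_min hex hk (hfk.trans hfn)
          · rw [if_neg hc] at h
            have := hPlt _ (hfmem n)
            rw [h] at this
            exact lt_irrefl 0 this
        · exact h
      refine ⟨n, ?_⟩
      rw [habn, hfn]
      exact ⟨hAlt t ht, hBgt t ht⟩
    · rintro ⟨n, hn⟩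
      rcases hab n with h | ⟨h, _⟩
      · rw [h] at hn; simp at hn
      · rw [h] at hn
        obtain ⟨t', ht', hft'⟩ := hfmem n
        rw [hft'] at hn
        exact hIooS t' ht' hn
  · intro n hlt
    rcases hab n with h | ⟨h, _⟩
    · rw [h] at hlt; exact absurd hlt (lt_irrefl 0)
    · rw [h] at hlt ⊢
      obtain ⟨t, ht, hft⟩ := hfmem n
      rw [hft] at hlt ⊢
      exact ⟨hAnot t ht, hBnot t ht⟩


lemma seg_dist (p q : ℝ × ℝ) (s : ℝ) (hs0 : 0 ≤ s) :
    dist ((1-s) • p + s • q) p = s * dist q p := by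
  have h : (1-s) • p + s • q - p = s • (q - p) := by
    rw [sub_smul, one_smul, smul_sub]; abel
  rw [dist_eq_norm, h, norm_smul, Real.norm_eq_abs, abs_of_nonneg hs0, ← dist_eq_norm]

lemma seg_bound (p q : ℝ × ℝ) (s ε D : ℝ) (hs0 : 0 ≤ s) (hs1 : s ≤ 1)
    (hD : dist q p ≤ D) (hε : 0 < ε)
    (h : dist q p < ε/2 ∨ s < ε/(2*(D+1))) (hD0 : 0 ≤ D) :
    dist ((1-s) • p + s • q) p < ε/2 := by
  rw [seg_dist p q s hs0]
  rcases h with h | h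
  · calc s * dist q p ≤ 1 * dist q p :=
          mul_le_mul_of_nonneg_right hs1 dist_nonneg
      _ = dist q p := one_mul _
      _ < ε/2 := h
  · have hD1 : (0:ℝ) < D + 1 := by linarith
    calc s * dist q p ≤ s * (D + 1) :=
          mul_le_mul_of_nonneg_left (by linarith) hs0
      _ < (ε/(2*(D+1))) * (D + 1) := by
          exact mul_lt_mul_of_pos_right h hD1
      _ = ε/2 := by field_simp


lemma frac_bound (num den δ gap ε D : ℝ) (hden : 0 < den) (hδ : 0 < δ) (hδden : δ ≤ den)
    (hnum0 : 0 ≤ num) (hnumgap : num ≤ gap) (hgap : gap < δ * ε / (2*(D+1))) (hD1 : (0:ℝ) < D + 1) :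
    num / den < ε / (2*(D+1)) := by
  have h1 : num / den ≤ num / δ := div_le_div_of_nonneg_left hnum0 hδ hδden
  have h2 : num / δ ≤ gap / δ := div_le_div_of_nonneg_right hnumgap hδ.le
  have h3 : gap / δ < (δ * ε / (2*(D+1))) / δ :=
    (div_lt_div_iff_of_pos_right hδ).2 hgap
  have h4 : (δ * ε / (2*(D+1))) / δ = ε / (2*(D+1)) := by
    rw [div_div, mul_comm (2*(D+1)) δ, mul_div_mul_left _ _ hδ.ne']
  rw [h4] at h3
  linarith


/-- For a path `α` in the plane with endpoints outside an open set `U`, the preimage of `U`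
is a countable disjoint union of open intervals whose endpoints map to `∂U`, and replacing
`α` on each such interval by the constant-speed straight segment between the endpoint values
yields a continuous path. -/
theorem straighten_path_through_open_set
    (α : ℝ → ℝ × ℝ) (hα : ContinuousOn α (Set.Icc (0 : ℝ) 1))
    (U : Set (ℝ × ℝ)) (hU : IsOpen U) (h0 : α 0 ∉ U) (h1 : α 1 ∉ U) :
    ∃ a b : ℕ → ℝ, (∀ n, a n ≤ b n) ∧ (∀ n, Set.Icc (a n) (b n) ⊆ Set.Icc (0 : ℝ) 1) ∧
      (Pairwise fun m n => Disjoint (Set.Ioo (a m) (b m)) (Set.Ioo (a n) (b n))) ∧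
      {t ∈ Set.Icc (0 : ℝ) 1 | α t ∈ U} = ⋃ n, Set.Ioo (a n) (b n) ∧
      (∀ n, a n < b n → α (a n) ∈ frontier U ∧ α (b n) ∈ frontier U) ∧
      ∃ α' : ℝ → ℝ × ℝ,
        (∀ t ∈ Set.Icc (0 : ℝ) 1, α t ∉ U → α' t = α t) ∧
        (∀ n, a n < b n → ∀ t ∈ Set.Icc (a n) (b n),
          α' t = (1 - (t - a n) / (b n - a n)) • α (a n) +
            ((t - a n) / (b n - a n)) • α (b n)) ∧
        ContinuousOn α' (Set.Icc (0 : ℝ) 1) := by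
  classical
  set S : Set ℝ := {t | t ∈ Set.Icc (0:ℝ) 1 ∧ α t ∈ U} with hSdef
  have hSsub : S ⊆ Icc 0 1 := fun t ht => ht.1
  have hS0 : (0:ℝ) ∉ S := fun h => h0 h.2
  have hS1 : (1:ℝ) ∉ S := fun h => h1 h.2
  have hSopen : IsOpen S := by
    obtain ⟨V, hV, hVeq⟩ := (continuousOn_iff'.1 hα) U hU
    have hSV : S = V ∩ Ioo 0 1 := by
      apply Subset.antisymm
      · intro t ht
        have htV : t ∈ V ∩ Icc 0 1 := by rw [← hVeq]; exact ⟨ht.2, ht.1⟩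
        refine ⟨htV.1, ?_⟩
        rcases eq_or_lt_of_le ht.1.1 with h | h
        · exfalso; apply hS0; rwa [← h] at ht
        rcases eq_or_lt_of_le ht.1.2 with h' | h'
        · exfalso; apply hS1; rwa [h'] at ht
        exact ⟨h, h'⟩
      · intro t ht
        have hmem : t ∈ α ⁻¹' U ∩ Icc 0 1 := by
          rw [hVeq]; exact ⟨ht.1, Ioo_subset_Icc_self ht.2⟩
        exact ⟨hmem.2, hmem.1⟩
    rw [hSV]; exact hV.inter isOpen_Ioo
  obtain ⟨a, b, hab, hIcc, hdisj, hUnion, hends⟩ := open_decomp S hSopen hSsub hS0 hS1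
  have hfr : ∀ n, a n < b n → α (a n) ∈ frontier U ∧ α (b n) ∈ frontier U := by
    intro n hn
    have hIoosub : Ioo (a n) (b n) ⊆ S := by
      rw [hUnion]; exact subset_iUnion (fun n => Ioo (a n) (b n)) n
    have hanotS := hends n hn
    have haIcc : a n ∈ Icc (0:ℝ) 1 := hIcc n ⟨le_refl _, hab n⟩
    have hbIcc : b n ∈ Icc (0:ℝ) 1 := hIcc n ⟨hab n, le_refl _⟩
    have hclosure : ∀ c ∈ Icc (0:ℝ) 1, c ∈ closure (Ioo (a n) (b n)) → α c ∈ closure U := by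
      intro c hc hcc
      have hne : (nhdsWithin c (Ioo (a n) (b n))).NeBot :=
        mem_closure_iff_nhdsWithin_neBot.1 hcc
      have htend : Filter.Tendsto α (nhdsWithin c (Ioo (a n) (b n))) (nhds (α c)) :=
        (hα c hc).mono (hIoosub.trans hSsub)
      exact mem_closure_of_tendsto htend
        (eventually_mem_nhdsWithin.mono (fun s hs => (hIoosub hs).2))
    have hclIoo : closure (Ioo (a n) (b n)) = Icc (a n) (b n) := closure_Ioo hn.ne
    constructor
    · rw [hU.frontier_eq]
      exact ⟨hclosure _ haIcc (by rw [hclIoo]; exact left_mem_Icc.2 (hab n)),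
        fun hmem => hanotS.1 ⟨haIcc, hmem⟩⟩
    · rw [hU.frontier_eq]
      exact ⟨hclosure _ hbIcc (by rw [hclIoo]; exact right_mem_Icc.2 (hab n)),
        fun hmem => hanotS.2 ⟨hbIcc, hmem⟩⟩
  refine ⟨a, b, hab, hIcc, hdisj, hUnion, hfr, ?_⟩
  obtain ⟨α', hα'⟩ : ∃ α' : ℝ → ℝ × ℝ, ∀ t, α' t =
      if h : ∃ n, t ∈ Ioo (a n) (b n) then
        (1 - (t - a h.choose) / (b h.choose - a h.choose)) • α (a h.choose) +
          ((t - a h.choose) / (b h.choose - a h.choose)) • α (b h.choose)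
      else α t := ⟨_, fun t => rfl⟩
  have key1 : ∀ t, (¬∃ n, t ∈ Ioo (a n) (b n)) → α' t = α t := fun t h => by
    rw [hα' t, dif_neg h]
  have key2 : ∀ n t, t ∈ Ioo (a n) (b n) →
      α' t = (1 - (t - a n) / (b n - a n)) • α (a n) + ((t - a n) / (b n - a n)) • α (b n) := by
    intro n t ht
    have hex : ∃ n, t ∈ Ioo (a n) (b n) := ⟨n, ht⟩
    have hch : hex.choose = n := by
      by_contra hne
      exact Set.disjoint_left.1 (hdisj hne) hex.choose_spec ht
    rw [hα' t, dif_pos hex, hch]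
  have hnotin : ∀ t, t ∉ S → ¬∃ n, t ∈ Ioo (a n) (b n) := by
    rintro t ht ⟨n, hn⟩
    exact ht (by rw [hUnion]; exact mem_iUnion.2 ⟨n, hn⟩)
  refine ⟨α', ?_, ?_, ?_⟩
  · intro t ht hU'
    exact key1 t (hnotin t (fun hs => hU' hs.2))
  · intro n hn t ht
    rcases eq_or_lt_of_le ht.1 with he | hlt1
    · rw [← he, key1 _ (hnotin _ (hends n hn).1)]
      simp
    rcases eq_or_lt_of_le ht.2 with he | hlt2
    · rw [he, key1 _ (hnotin _ (hends n hn).2),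
        div_self (ne_of_gt (sub_pos.2 hn))]
      simp
    · exact key2 n t ⟨hlt1, hlt2⟩
  · -- continuity
    have hUC := isCompact_Icc.uniformContinuousOn_of_continuous hα
    rw [Metric.uniformContinuousOn_iff] at hUC
    obtain ⟨C, hC⟩ := (Metric.isBounded_iff).1
      (isCompact_Icc.image_of_continuousOn hα).isBounded
    set D := max C 0 with hDdef
    have hD0 : (0:ℝ) ≤ D := le_max_right _ _
    have hD1 : (0:ℝ) < D + 1 := by linarith
    have hDb : ∀ x ∈ Icc (0:ℝ) 1, ∀ y ∈ Icc (0:ℝ) 1, dist (α x) (α y) ≤ D := by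
      intro x hx y hy
      exact le_trans (hC (mem_image_of_mem α hx) (mem_image_of_mem α hy)) (le_max_left _ _)
    intro t₀ ht₀
    by_cases hc : ∃ n, t₀ ∈ Ioo (a n) (b n)
    · obtain ⟨n, hn⟩ := hc
      have haff : Continuous (fun t : ℝ => (1 - (t - a n) / (b n - a n)) • α (a n) +
          ((t - a n) / (b n - a n)) • α (b n)) := by fun_prop
      have heq : (fun t : ℝ => (1 - (t - a n) / (b n - a n)) • α (a n) +
          ((t - a n) / (b n - a n)) • α (b n)) =ᶠ[nhds t₀] α' :=
        Filter.eventuallyEq_of_mem (Ioo_mem_nhds hn.1 hn.2) (fun s hs => (key2 n s hs).symm)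
      exact (haff.continuousAt.congr heq).continuousWithinAt
    · have ht0' : α' t₀ = α t₀ := key1 t₀ hc
      rw [Metric.continuousWithinAt_iff]
      intro ε hε
      obtain ⟨δ, hδ, hδ'⟩ := hUC (ε/2) (by linarith)
      have h2pos : 0 < δ * ε / (2 * (D + 1)) := by
        apply div_pos (mul_pos hδ hε); linarith
      refine ⟨min δ (δ * ε / (2 * (D + 1))), lt_min hδ h2pos, ?_⟩
      intro t ht hdist
      rw [ht0']
      have hdδ : dist t t₀ < δ := lt_of_lt_of_le hdist (min_le_left _ _)
      have hd2 : dist t t₀ < δ * ε / (2 * (D + 1)) := lt_of_lt_of_le hdist (min_le_right _ _)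
      by_cases htc : ∃ n, t ∈ Ioo (a n) (b n)
      swap
      · rw [key1 t htc]
        exact lt_of_lt_of_le (hδ' t ht t₀ ht₀ hdδ) (by linarith)
      obtain ⟨n, htn⟩ := htc
      have hltn : a n < b n := lt_trans htn.1 htn.2
      have hbpos : 0 < b n - a n := sub_pos.2 hltn
      have haIcc : a n ∈ Icc (0:ℝ) 1 := hIcc n ⟨le_refl _, hab n⟩
      have hbIcc : b n ∈ Icc (0:ℝ) 1 := hIcc n ⟨hab n, le_refl _⟩
      rw [key2 n t htn]
      have hcase : t₀ ≤ a n ∨ b n ≤ t₀ := by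
        by_contra h
        push_neg at h
        exact hc ⟨n, h.1, h.2⟩
      set s := (t - a n) / (b n - a n) with hsdef
      have hs0 : 0 < s := div_pos (sub_pos.2 htn.1) hbpos
      have hs1 : s < 1 := (div_lt_one hbpos).2 (by linarith [htn.2])
      rcases hcase with hca | hcb
      · have htt0 : dist t t₀ = t - t₀ := by
          rw [Real.dist_eq, abs_of_pos (by linarith [htn.1] : (0:ℝ) < t - t₀)]
        have hdan : dist (a n) t₀ < δ := by
          rw [Real.dist_eq, abs_of_nonneg (by linarith : (0:ℝ) ≤ a n - t₀)]
          have h' := hdδ; rw [htt0] at h'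
          linarith [htn.1]
        have h1 : dist (α (a n)) (α t₀) < ε/2 := hδ' _ haIcc _ ht₀ hdan
        have h2 : dist ((1-s) • α (a n) + s • α (b n)) (α (a n)) < ε/2 := by
          apply seg_bound _ _ _ _ _ hs0.le hs1.le (hDb _ hbIcc _ haIcc) hε ?_ hD0
          by_cases hsmall : b n - a n < δ
          · left
            apply hδ' _ hbIcc _ haIcc
            rw [Real.dist_eq, abs_of_pos hbpos]; exact hsmall
          · right
            push_neg at hsmall
            rw [hsdef]
            apply frac_bound _ _ δ (dist t t₀) _ _ hbpos hδ hsmall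
              (sub_pos.2 htn.1).le ?_ hd2 hD1
            rw [htt0]; linarith [htn.1]
        calc dist ((1-s) • α (a n) + s • α (b n)) (α t₀)
            ≤ dist ((1-s) • α (a n) + s • α (b n)) (α (a n)) + dist (α (a n)) (α t₀) :=
              dist_triangle _ _ _
          _ < ε := by linarith
      · have hs' : (1:ℝ) - s = (b n - t) / (b n - a n) := by
          rw [hsdef]; field_simp; ring
        have hrw : (1-s) • α (a n) + s • α (b n)
            = (1 - (1-s)) • α (b n) + (1-s) • α (a n) := by
          rw [sub_sub_cancel]; exact add_comm _ _
        rw [hrw]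
        have htt0 : dist t t₀ = t₀ - t := by
          rw [Real.dist_eq, abs_of_nonpos (by linarith [htn.2] : t - t₀ ≤ 0)]; ring
        have hdbn : dist (b n) t₀ < δ := by
          rw [Real.dist_eq, abs_of_nonpos (by linarith : b n - t₀ ≤ 0)]
          have h' := hdδ; rw [htt0] at h'
          linarith [htn.2]
        have h1 : dist (α (b n)) (α t₀) < ε/2 := hδ' _ hbIcc _ ht₀ hdbn
        have h2 : dist ((1-(1-s)) • α (b n) + (1-s) • α (a n)) (α (b n)) < ε/2 := by
          apply seg_bound _ _ _ _ _ (by linarith) (by linarith)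
            (hDb _ haIcc _ hbIcc) hε ?_ hD0
          by_cases hsmall : b n - a n < δ
          · left
            apply hδ' _ haIcc _ hbIcc
            rw [Real.dist_eq, abs_of_nonpos (by linarith : a n - b n ≤ 0)]; linarith
          · right
            push_neg at hsmall
            rw [hs']
            apply frac_bound _ _ δ (dist t t₀) _ _ hbpos hδ hsmall
              (by linarith [htn.2] : (0:ℝ) ≤ b n - t) ?_ hd2 hD1
            rw [htt0]; linarith
        calc dist ((1-(1-s)) • α (b n) + (1-s) • α (a n)) (α t₀)
            ≤ dist ((1-(1-s)) • α (b n) + (1-s) • α (a n)) (α (b n))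
              + dist (α (b n)) (α t₀) := dist_triangle _ _ _
          _ < ε := by linarith
end
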